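/- arXiv:2005.12354 — 10 statements merged into one kernel-verified Lean document; each statement's English description precedes it below -/
import Mathlib

section
/- Let S ⊆ ℕ^d be a good semigroup, E ⊆ S a good ideal, α ∈ E and F ⊊ I. Suppose there exists a set H ⊆ I of cardinality d−1 with F ⊆ H such that Δ^E_G(α) = ∅ for every set G with F ⊆ G ⊆ H. Then Δ^E_{F̂}(α) = ∅. -/
/-! Common definitions for good semigroups in `ℕ^d`. -/

/-- A *good semigroup*: a submonoid of `ℕ^d` satisfying (G1), (G2), (G3). -/
def IsGoodSemigroup {d : ℕ} (S : Set (Fin d → ℕ)) : Prop :=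
  (0 : Fin d → ℕ) ∈ S ∧
  (∀ α ∈ S, ∀ β ∈ S, α + β ∈ S) ∧
  (∀ α ∈ S, ∀ β ∈ S, α ⊓ β ∈ S) ∧
  (∀ α ∈ S, ∀ β ∈ S, α ≠ β → ∀ i : Fin d, α i = β i →
    ∃ ε ∈ S, α i < ε i ∧ ∀ j : Fin d, j ≠ i →
      min (α j) (β j) ≤ ε j ∧ (α j ≠ β j → ε j = min (α j) (β j))) ∧
  (∃ c : Fin d → ℕ, ∀ x : Fin d → ℕ, c ≤ x → x ∈ S)

/-- A *good ideal* of `S`: a nonempty subset `E ⊆ S` with `E + S ⊆ E`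
satisfying (G1) and (G2). -/
def IsGoodIdeal {d : ℕ} (S E : Set (Fin d → ℕ)) : Prop :=
  E ⊆ S ∧ E.Nonempty ∧
  (∀ α ∈ E, ∀ σ ∈ S, α + σ ∈ E) ∧
  (∀ α ∈ E, ∀ β ∈ E, α ⊓ β ∈ E) ∧
  (∀ α ∈ E, ∀ β ∈ E, α ≠ β → ∀ i : Fin d, α i = β i →
    ∃ ε ∈ E, α i < ε i ∧ ∀ j : Fin d, j ≠ i →
      min (α j) (β j) ≤ ε j ∧ (α j ≠ β j → ε j = min (α j) (β j)))

/-- `Δ^E_F(α)`. -/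
def DeltaSet {d : ℕ} (E : Set (Fin d → ℕ)) (F : Finset (Fin d)) (α : Fin d → ℕ) :
    Set (Fin d → ℕ) :=
  {β | β ∈ E ∧ (∀ i ∈ F, β i = α i) ∧ ∀ j ∉ F, α j < β j}

/-- `Δ̃^E_F(α)`. -/
def DeltaTilde {d : ℕ} (E : Set (Fin d → ℕ)) (F : Finset (Fin d)) (α : Fin d → ℕ) :
    Set (Fin d → ℕ) :=
  {β | β ∈ E ∧ (∀ i ∈ F, β i = α i) ∧ ∀ j ∉ F, α j ≤ β j} \ {α}

/-- `c` is the conductor of `E`: the minimal element with `c + ℕ^d ⊆ E`. -/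
def IsConductor {d : ℕ} (E : Set (Fin d → ℕ)) (c : Fin d → ℕ) : Prop :=
  (∀ x : Fin d → ℕ, c ≤ x → x ∈ E) ∧
  ∀ c' : Fin d → ℕ, (∀ x : Fin d → ℕ, c' ≤ x → x ∈ E) → c ≤ c'

/-- `α ≤ β` are consecutive in `A`. -/
def ConsecutiveIn {d : ℕ} (A : Set (Fin d → ℕ)) (α β : Fin d → ℕ) : Prop :=
  α ∈ A ∧ β ∈ A ∧ α ≤ β ∧
  ∀ δ ∈ A, α ≤ δ → δ ≤ β → δ = α ∨ δ = β

/-- `α` is the complete infimum of the family `β` (with `Δ`-sets taken in `S`). -/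
def IsCompleteInf {d : ℕ} (S : Set (Fin d → ℕ)) (α : Fin d → ℕ) {r : ℕ}
    (β : Fin r → Fin d → ℕ) : Prop :=
  2 ≤ r ∧ ∃ F : Fin r → Finset (Fin d),
    (∀ j, (F j).Nonempty ∧ F j ≠ Finset.univ) ∧
    (∀ j, β j ∈ DeltaSet S (F j) α) ∧
    (∀ j k, j ≠ k → α = β j ⊓ β k) ∧
    (∀ x : Fin d, ∃ j, x ∉ F j)

/-- `α` is a complete infimum in `A` of the elements of the family `β`. -/
def IsCompleteInfIn {d : ℕ} (S A : Set (Fin d → ℕ)) (α : Fin d → ℕ) {r : ℕ}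
    (β : Fin r → Fin d → ℕ) : Prop :=
  α ∈ A ∧ (∀ k, β k ∈ A) ∧ IsCompleteInf S α β

/-- The order `≤≤`: `α = β` or `α_j < β_j` for every `j`. -/
def DomLE {d : ℕ} (α β : Fin d → ℕ) : Prop := α = β ∨ ∀ j, α j < β j

/-- The set `B`: maximal elements of `(S \ E) \ prev` with respect to `≤≤`. -/
def Bstep {d : ℕ} (S E prev : Set (Fin d → ℕ)) : Set (Fin d → ℕ) :=
  {α | α ∈ (S \ E) \ prev ∧ ∀ β ∈ (S \ E) \ prev, DomLE α β → β = α}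

/-- The set `C`: elements of `B` that are complete infima in `S \ E` of
elements of `B` (with `1 < r ≤ d`). -/
def Cstep {d : ℕ} (S E prev : Set (Fin d → ℕ)) : Set (Fin d → ℕ) :=
  {α | α ∈ Bstep S E prev ∧ ∃ r : ℕ, 1 < r ∧ r ≤ d ∧
    ∃ β : Fin r → Fin d → ℕ, (∀ k, β k ∈ Bstep S E prev) ∧
      IsCompleteInfIn S (S \ E) α β}

/-- `D = B \ C`. -/
def Dstep {d : ℕ} (S E prev : Set (Fin d → ℕ)) : Set (Fin d → ℕ) :=
  Bstep S E prev \ Cstep S E prev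

/-- `Dacc S E i = D^(1) ∪ ⋯ ∪ D^(i)`. -/
def Dacc {d : ℕ} (S E : Set (Fin d → ℕ)) : ℕ → Set (Fin d → ℕ)
  | 0 => ∅
  | (i + 1) => Dacc S E i ∪ Dstep S E (Dacc S E i)

/-- `N` is the number of levels of `S \ E`: the least `N` with
`S \ E = D^(1) ∪ ⋯ ∪ D^(N)`. -/
def IsLevelsNumber {d : ℕ} (S E : Set (Fin d → ℕ)) (N : ℕ) : Prop :=
  (S \ E) ⊆ Dacc S E N ∧ ∀ M : ℕ, (S \ E) ⊆ Dacc S E M → N ≤ M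

/-- The level `A_i := D^(N+1-i)` for `1 ≤ i ≤ N` (and `∅` otherwise). -/
def Alevel {d : ℕ} (S E : Set (Fin d → ℕ)) (N i : ℕ) : Set (Fin d → ℕ) :=
  if 1 ≤ i ∧ i ≤ N then Dstep S E (Dacc S E (N - i)) else ∅

/-- `α` is (the representative of) a `U`-subspace of `E` (w.r.t. conductor `cE`):
`α ∈ E` and `α_j = cE_j` for every `j ∉ U`. -/
def IsSubspaceRep {d : ℕ} (E : Set (Fin d → ℕ)) (cE : Fin d → ℕ)
    (U : Finset (Fin d)) (α : Fin d → ℕ) : Prop :=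
  α ∈ E ∧ ∀ j ∉ U, α j = cE j

/-- `β(U) ∈ Δ^E_F(α(U))`, at the level of representatives. -/
def SubDelta {d : ℕ} (E : Set (Fin d → ℕ)) (cE : Fin d → ℕ)
    (U F : Finset (Fin d)) (α β : Fin d → ℕ) : Prop :=
  IsSubspaceRep E cE U β ∧ (∀ j ∈ F, β j = α j) ∧
  ∀ j ∈ U, j ∉ F → α j < β j

/-- `β(U) ∈ Δ̃^E_F(α(U))`, at the level of representatives. -/
def SubDeltaT {d : ℕ} (E : Set (Fin d → ℕ)) (cE : Fin d → ℕ)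
    (U F : Finset (Fin d)) (α β : Fin d → ℕ) : Prop :=
  IsSubspaceRep E cE U β ∧ (∀ j ∈ F, β j = α j) ∧
  (∀ j ∈ U, j ∉ F → α j ≤ β j) ∧ ¬(∀ j ∈ U, β j = α j)

/-- `α(U) ≤ θ(U)` are consecutive among the `U`-subspaces of `S`. -/
def SubConsecutive {d : ℕ} (S : Set (Fin d → ℕ)) (cE : Fin d → ℕ)
    (U : Finset (Fin d)) (α β : Fin d → ℕ) : Prop :=
  IsSubspaceRep S cE U α ∧ IsSubspaceRep S cE U β ∧ (∀ i ∈ U, α i ≤ β i) ∧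
  ∀ δ : Fin d → ℕ, IsSubspaceRep S cE U δ → (∀ i ∈ U, α i ≤ δ i) →
    (∀ i ∈ U, δ i ≤ β i) → (∀ i ∈ U, δ i = α i) ∨ (∀ i ∈ U, δ i = β i)

/-- `α(U)` is the complete infimum of the family of `U`-subspaces `β`. -/
def SubIsCompleteInf {d : ℕ} (S : Set (Fin d → ℕ)) (cE : Fin d → ℕ)
    (U : Finset (Fin d)) (α : Fin d → ℕ) {r : ℕ}
    (β : Fin r → Fin d → ℕ) : Prop :=
  2 ≤ r ∧ ∃ F : Fin r → Finset (Fin d),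
    (∀ j, (F j).Nonempty ∧ F j ⊂ U) ∧
    (∀ j, SubDelta S cE U (F j) α (β j)) ∧
    (∀ j k, j ≠ k → ∀ i ∈ U, α i = min (β j i) (β k i)) ∧
    (∀ x : Fin d, ∃ j, x ∉ F j)

theorem stmt_0 {d : ℕ} (hd : 1 ≤ d) (S E : Set (Fin d → ℕ))
    (hS : IsGoodSemigroup S) (hE : IsGoodIdeal S E)
    (α : Fin d → ℕ) (hα : α ∈ E)
    (F H : Finset (Fin d)) (hF : F ⊂ Finset.univ)
    (hH : H.card = d - 1) (hFH : F ⊆ H)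
    (hempty : ∀ G : Finset (Fin d), F ⊆ G → G ⊆ H → DeltaSet E G α = ∅) :
    DeltaSet E Fᶜ α = ∅ := by
  ext β
  simp only [DeltaSet, Set.mem_setOf_eq, Set.mem_empty_iff_false, iff_false]
  rintro ⟨hβE, hβeq, hβgt⟩
  obtain ⟨c, hc⟩ := hS.2.2.2.2
  rcases F.eq_empty_or_nonempty with hFe | ⟨f, hfF⟩
  · have hmem : (α + (c + 1)) ∈ DeltaSet E ∅ α := by
      refine ⟨hE.2.2.1 α hα (c + 1) (hc _ (by intro j; simp)), by simp, ?_⟩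
      intro j _
      simp [Pi.add_apply]
    rw [hempty ∅ (by simp [hFe]) (by simp)] at hmem
    exact hmem
  · have hcard : Hᶜ.card = 1 := by
      rw [Finset.card_compl, hH]
      have : H.card ≤ d := by
        simpa using Finset.card_le_card (Finset.subset_univ H)
      simp [Fintype.card_fin] at *
      omega
    obtain ⟨i, hi⟩ := Finset.card_eq_one.mp hcard
    have hiH : i ∉ H := by
      have : i ∈ Hᶜ := by rw [hi]; exact Finset.mem_singleton_self i
      simpa using this
    have hHi : ∀ j, j ∉ H → j = i := by
      intro j hj
      have : j ∈ Hᶜ := Finset.mem_compl.mpr hj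
      rw [hi] at this
      simpa using this
    have hiF : i ∉ F := fun h => hiH (hFH h)
    have hαβi : α i = β i := (hβeq i (Finset.mem_compl.mpr hiF)).symm
    have hαleβ : ∀ j, α j ≤ β j := by
      intro j
      by_cases hj : j ∈ F
      · exact (hβgt j (by simpa using hj)).le
      · exact (hβeq j (Finset.mem_compl.mpr hj)).ge
    have hne : α ≠ β := by
      intro h
      have := hβgt f (by simpa using hfF)
      rw [h] at this
      exact lt_irrefl _ this
    obtain ⟨ε, hεE, hεi, hεj⟩ := hE.2.2.2.2 α hα β hβE hne i hαβi
    set G' : Finset (Fin d) := F ∪ H.filter (fun j => ε j = α j) with hG'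
    have hFG' : F ⊆ G' := Finset.subset_union_left
    have hG'H : G' ⊆ H := by
      apply Finset.union_subset hFH
      exact Finset.filter_subset _ _
    have hmem : ε ∈ DeltaSet E G' α := by
      refine ⟨hεE, ?_, ?_⟩
      · intro j hj
        rcases Finset.mem_union.mp hj with hjF | hjf
        · have hji : j ≠ i := fun h => hiF (h ▸ hjF)
          have hne' : α j ≠ β j := (hβgt j (by simpa using hjF)).ne
          have := (hεj j hji).2 hne'
          rw [this, min_eq_left (hαleβ j)]
        · exact (Finset.mem_filter.mp hjf).2
      · intro j hj
        by_cases hjH : j ∈ H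
        · have hji : j ≠ i := fun h => hiH (h ▸ hjH)
          have hjne : ε j ≠ α j := by
            intro h
            exact hj (Finset.mem_union_right _ (Finset.mem_filter.mpr ⟨hjH, h⟩))
          have hge : α j ≤ ε j := by
            have := (hεj j hji).1
            rwa [min_eq_left (hαleβ j)] at this
          exact lt_of_le_of_ne hge (Ne.symm hjne)
        · rw [hHi j hjH]
          exact hεi
    rw [hempty G' hFG' hG'H] at hmem
    exact hmem
end

section
/- Let S ⊆ ℕ^d be a good semigroup, E ⊆ S a good ideal, α ∈ E and F ⊊ I. If β ∈ Δ^E_F(α) and β is consecutive to α in E, then Δ^E_H(α) = ∅ for every set H with F ⊊ H ⊊ I. -/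
theorem stmt_2 {d : ℕ} (hd : 1 ≤ d) (S E : Set (Fin d → ℕ))
    (hS : IsGoodSemigroup S) (hE : IsGoodIdeal S E)
    (α : Fin d → ℕ) (hα : α ∈ E)
    (F : Finset (Fin d)) (hF : F ⊂ Finset.univ)
    (β : Fin d → ℕ) (hβ : β ∈ DeltaSet E F α)
    (hcons : ConsecutiveIn E α β) :
    ∀ H : Finset (Fin d), F ⊂ H → H ⊂ Finset.univ → DeltaSet E H α = ∅ := by
  intro H hFH hHuniv
  ext γ
  simp only [Set.mem_empty_iff_false, iff_false]
  rintro ⟨hγE, hγH, hγnH⟩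
  obtain ⟨hβE, hβF, hβnF⟩ := hβ
  obtain ⟨-, -, hαβ, hmax⟩ := hcons
  have hδE : β ⊓ γ ∈ E := hE.2.2.2.1 β hβE γ hγE
  have hαδ : α ≤ β ⊓ γ := by
    intro i
    refine le_inf (hαβ i) ?_
    by_cases h : i ∈ H
    · exact (hγH i h).ge
    · exact (hγnH i h).le
  obtain ⟨j, hjH, hjF⟩ := Finset.exists_of_ssubset hFH
  obtain ⟨k, -, hkH⟩ := Finset.exists_of_ssubset hHuniv
  have hkF : k ∉ F := fun hk => hkH (hFH.subset hk)
  rcases hmax _ hδE hαδ inf_le_left with h | h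
  · have h1 : α k < (β ⊓ γ) k := lt_inf_iff.mpr ⟨hβnF k hkF, hγnH k hkH⟩
    rw [h] at h1
    exact lt_irrefl _ h1
  · have h1 : (β ⊓ γ) j ≤ α j := by
      have := hγH j hjH
      calc (β ⊓ γ) j ≤ γ j := inf_le_right
        _ = α j := this
    have h2 : α j < β j := hβnF j hjF
    rw [h] at h1
    omega
end

section
/- Let S ⊆ ℕ^d be a good semigroup, E ⊆ S a good ideal, α ∈ E and F ⊆ I. If Δ^E_F(α) = ∅ and F = G₁ ∪ G₂, then either Δ^E_{G₁}(α) = ∅ or Δ^E_{G₂}(α) = ∅. -/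
theorem stmt_3 {d : ℕ} (hd : 1 ≤ d) (S E : Set (Fin d → ℕ))
    (hS : IsGoodSemigroup S) (hE : IsGoodIdeal S E)
    (α : Fin d → ℕ) (hα : α ∈ E)
    (F G₁ G₂ : Finset (Fin d)) (hFempty : DeltaSet E F α = ∅)
    (hFdec : F = G₁ ∪ G₂) :
    DeltaSet E G₁ α = ∅ ∨ DeltaSet E G₂ α = ∅ := by
  by_contra h
  push_neg at h
  obtain ⟨h1, h2⟩ := h
  obtain ⟨β, hβE, hβeq, hβgt⟩ := h1
  obtain ⟨γ, hγE, hγeq, hγgt⟩ := h2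
  obtain ⟨-, -, -, hG1, -⟩ := hE
  have hmem : β ⊓ γ ∈ DeltaSet E F α := by
    refine ⟨hG1 β hβE γ hγE, ?_, ?_⟩
    · intro i hi
      subst hFdec
      rcases Finset.mem_union.mp hi with hi1 | hi2
      · by_cases hi2 : i ∈ G₂
        · simp [Pi.inf_apply, hβeq i hi1, hγeq i hi2]
        · have := hγgt i hi2
          simp [Pi.inf_apply, hβeq i hi1]
          omega
      · by_cases hi1 : i ∈ G₁
        · simp [Pi.inf_apply, hβeq i hi1, hγeq i hi2]
        · have := hβgt i hi1
          simp [Pi.inf_apply, hγeq i hi2]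
          omega
    · intro j hj
      subst hFdec
      have hj1 : j ∉ G₁ := fun hc => hj (Finset.mem_union_left _ hc)
      have hj2 : j ∉ G₂ := fun hc => hj (Finset.mem_union_right _ hc)
      have := hβgt j hj1
      have := hγgt j hj2
      simp [Pi.inf_apply]
      omega
  rw [hFempty] at hmem
  exact hmem
end

section
/- Let S ⊆ ℕ^d be a good semigroup, E ⊆ S a good ideal, α ∈ E, and let F ⊊ I be such that Δ^E_F(α) ≠ ∅ and Δ^E_H(α) = ∅ for every H with F ⊊ H ⊊ I (F is maximal among proper subsets of I with Δ^E_F(α) ≠ ∅). Then for every H ⊆ I, if Δ^E_H(α) ≠ ∅ then either H ⊆ F or H ⊇ F̂. -/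
theorem stmt_4 {d : ℕ} (hd : 1 ≤ d) (S E : Set (Fin d → ℕ))
    (hS : IsGoodSemigroup S) (hE : IsGoodIdeal S E)
    (α : Fin d → ℕ) (hα : α ∈ E)
    (F : Finset (Fin d)) (hF : F ⊂ Finset.univ)
    (hFne : (DeltaSet E F α).Nonempty)
    (hmax : ∀ H : Finset (Fin d), F ⊂ H → H ⊂ Finset.univ → DeltaSet E H α = ∅) :
    ∀ H : Finset (Fin d), (DeltaSet E H α).Nonempty → H ⊆ F ∨ Fᶜ ⊆ H := by
  intro H hHne
  by_cases hHF : H ⊆ F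
  · exact Or.inl hHF
  · right
    obtain ⟨β, hβE, hβF, hβn⟩ := hFne
    obtain ⟨γ, hγE, hγH, hγn⟩ := hHne
    have hinf : β ⊓ γ ∈ DeltaSet E (F ∪ H) α := by
      refine ⟨hE.2.2.2.1 β hβE γ hγE, ?_, ?_⟩
      · intro i hi
        have hβ : α i ≤ β i := by
          by_cases h : i ∈ F
          · exact le_of_eq (hβF i h).symm
          · exact le_of_lt (hβn i h)
        have hγ2 : α i ≤ γ i := by
          by_cases h : i ∈ H
          · exact le_of_eq (hγH i h).symm
          · exact le_of_lt (hγn i h)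
        rcases Finset.mem_union.1 hi with h | h
        · have := hβF i h
          simp only [Pi.inf_apply]
          omega
        · have := hγH i h
          simp only [Pi.inf_apply]
          omega
      · intro j hj
        rw [Finset.mem_union] at hj
        push_neg at hj
        have h1 := hβn j hj.1
        have h2 := hγn j hj.2
        simp only [Pi.inf_apply]
        omega
    have hsub : F ⊂ F ∪ H :=
      ⟨Finset.subset_union_left, fun hc =>
        hHF fun x hx => hc (Finset.mem_union_right _ hx)⟩
    have huniv : F ∪ H = Finset.univ := by
      by_contra hne
      have := hmax (F ∪ H) hsub (lt_of_le_of_ne (Finset.subset_univ _) hne)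
      rw [this] at hinf
      exact hinf
    intro x hx
    have hx' : x ∈ F ∪ H := huniv ▸ Finset.mem_univ x
    rcases Finset.mem_union.1 hx' with h | h
    · exact absurd h (Finset.mem_compl.1 hx)
    · exact h
end

section
/- Let S ⊆ ℕ^d be a good semigroup, E ⊆ S a good ideal, α ∈ E, F ⊊ I nonempty, and suppose β ∈ Δ^E_F(α). Then there exist r with 1 ≤ r ≤ |F|, elements β^(1),…,β^(r) ∈ E, and sets G₁,…,G_r ⊆ I with G_i ⊇ F̂ for every i and G₁ ∩ ⋯ ∩ G_r = F̂, such that β^(i) ∈ Δ^E_{G_i}(α) for every i and α is the complete infimum in E of β, β^(1), …, β^(r), i.e. α = β ∧̃ β^(1) ∧̃ ⋯ ∧̃ β^(r). -/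
/-- Auxiliary: there is `ε ∈ E` with `ε > α` exactly on `T` and `ε = α` elsewhere. -/
def StrictOn {d : ℕ} (E : Set (Fin d → ℕ)) (α : Fin d → ℕ) (T : Finset (Fin d)) : Prop :=
  ∃ ε, ε ∈ E ∧ ∀ l, (l ∈ T → α l < ε l) ∧ (l ∉ T → ε l = α l)

lemma strictOn_ge {d : ℕ} {α : Fin d → ℕ} {T : Finset (Fin d)}
    {ε : Fin d → ℕ} (h : ∀ l, (l ∈ T → α l < ε l) ∧ (l ∉ T → ε l = α l)) :
    ∀ l, α l ≤ ε l := by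
  intro l
  by_cases hl : l ∈ T
  · exact le_of_lt ((h l).1 hl)
  · exact ((h l).2 hl).ge

lemma strictOn_inter {d : ℕ} {E : Set (Fin d → ℕ)} {α : Fin d → ℕ}
    (hEinf : ∀ a ∈ E, ∀ b ∈ E, a ⊓ b ∈ E) {T₁ T₂ : Finset (Fin d)}
    (h1 : StrictOn E α T₁) (h2 : StrictOn E α T₂) : StrictOn E α (T₁ ∩ T₂) := by
  obtain ⟨e1, he1, hp1⟩ := h1
  obtain ⟨e2, he2, hp2⟩ := h2
  refine ⟨e1 ⊓ e2, hEinf _ he1 _ he2, fun l => ?_⟩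
  have g1 := strictOn_ge hp1 l
  have g2 := strictOn_ge hp2 l
  constructor
  · intro hl
    rw [Finset.mem_inter] at hl
    exact lt_inf_iff.mpr ⟨(hp1 l).1 hl.1, (hp2 l).1 hl.2⟩
  · intro hl
    rw [Finset.mem_inter] at hl
    push_neg at hl
    by_cases h1l : l ∈ T₁
    · have := (hp2 l).2 (hl h1l)
      show e1 l ⊓ e2 l = α l
      rw [this]
      exact inf_eq_right.mpr g1
    · have := (hp1 l).2 h1l
      show e1 l ⊓ e2 l = α l
      rw [this]
      exact inf_eq_left.mpr g2

lemma g2_produce {d : ℕ} {E : Set (Fin d → ℕ)} {α : Fin d → ℕ}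
    (hG2 : ∀ a ∈ E, ∀ b ∈ E, a ≠ b → ∀ i : Fin d, a i = b i →
      ∃ ε ∈ E, a i < ε i ∧ ∀ j : Fin d, j ≠ i →
        min (a j) (b j) ≤ ε j ∧ (a j ≠ b j → ε j = min (a j) (b j)))
    {γ η : Fin d → ℕ} (hγ : γ ∈ E) (hη : η ∈ E)
    (hge1 : ∀ j, α j ≤ γ j) (hge2 : ∀ j, α j ≤ η j)
    (hne : γ ≠ η) {i : Fin d} (hi1 : γ i = α i) (hi2 : η i = α i)
    (hmin : ∀ j, γ j ≠ η j → min (γ j) (η j) = α j) :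
    ∃ ρ ∈ E, α i < ρ i ∧ (∀ j, α j ≤ ρ j) ∧ (∀ j, γ j ≠ η j → ρ j = α j) := by
  obtain ⟨ρ, hρE, hρi, hρj⟩ := hG2 γ hγ η hη hne i (hi1.trans hi2.symm)
  refine ⟨ρ, hρE, hi1 ▸ hρi, ?_, ?_⟩
  · intro j
    by_cases hj : j = i
    · subst hj
      exact le_of_lt (hi1 ▸ hρi)
    · exact le_trans (le_min (hge1 j) (hge2 j)) (hρj j hj).1
  · intro j hdne
    have hj : j ≠ i := by
      rintro rfl
      exact hdne (hi1.trans hi2.symm)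
    rw [(hρj j hj).2 hdne, hmin j hdne]

lemma exists_minimal_strict {d : ℕ} {E : Set (Fin d → ℕ)} {α : Fin d → ℕ}
    {F : Finset (Fin d)} (hEinf : ∀ a ∈ E, ∀ b ∈ E, a ⊓ b ∈ E) {i : Fin d} :
    ∀ n : ℕ, ∀ T : Finset (Fin d), T ⊆ F → StrictOn E α T → i ∈ T → T.card ≤ n →
    ∃ Tm, Tm ⊆ F ∧ StrictOn E α Tm ∧ i ∈ Tm ∧
      ∀ T', T' ⊆ F → StrictOn E α T' → i ∈ T' → Tm ⊆ T' := by
  intro n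
  induction n with
  | zero =>
    intro T _ _ hiT hc
    rw [Nat.le_zero, Finset.card_eq_zero] at hc
    subst hc
    exact absurd hiT (Finset.notMem_empty i)
  | succ n ih =>
    intro T hTF hTs hiT hc
    by_cases hall : ∀ T', T' ⊆ F → StrictOn E α T' → i ∈ T' → T ⊆ T'
    · exact ⟨T, hTF, hTs, hiT, hall⟩
    · push_neg at hall
      obtain ⟨T', hT'F, hT's, hiT', hnsub⟩ := hall
      have hneq : T ∩ T' ≠ T := by
        intro h
        refine hnsub (fun y hy => ?_)
        rw [← h] at hy
        exact (Finset.mem_inter.mp hy).2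
      have hlt : (T ∩ T').card < T.card :=
        Finset.card_lt_card ((Finset.inter_subset_left).ssubset_of_ne hneq)
      exact ih (T ∩ T') (Finset.Subset.trans Finset.inter_subset_left hTF)
        (strictOn_inter hEinf hTs hT's) (Finset.mem_inter.mpr ⟨hiT, hiT'⟩) (by omega)

theorem stmt_5 {d : ℕ} (hd : 1 ≤ d) (S E : Set (Fin d → ℕ))
    (hS : IsGoodSemigroup S) (hE : IsGoodIdeal S E)
    (α : Fin d → ℕ) (hα : α ∈ E)
    (F : Finset (Fin d)) (hFne : F.Nonempty) (hF : F ⊂ Finset.univ)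
    (β : Fin d → ℕ) (hβ : β ∈ DeltaSet E F α) :
    ∃ r : ℕ, 1 ≤ r ∧ r ≤ F.card ∧
      ∃ (βs : Fin r → Fin d → ℕ) (G : Fin r → Finset (Fin d)),
        (∀ i, Fᶜ ⊆ G i) ∧
        (∀ x : Fin d, (∀ i, x ∈ G i) ↔ x ∈ Fᶜ) ∧
        (∀ i, βs i ∈ DeltaSet E (G i) α) ∧
        IsCompleteInfIn S E α (Fin.cons β βs) := by
  classical
  obtain ⟨hES, hEne, hEadd, hEinf, hEG2⟩ := hE
  obtain ⟨hβE, hβF, hβout⟩ := hβ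
  obtain ⟨m0, hm0univ, hm0⟩ := Finset.exists_of_ssubset hF
  have hβge : ∀ j, α j ≤ β j := by
    intro j
    by_cases hj : j ∈ F
    · exact (hβF j hj).ge
    · exact (hβout j hj).le
  have hαβ : α ≠ β := by
    intro h
    have := hβout m0 hm0
    rw [← h] at this
    exact lt_irrefl _ this
  -- Step 1: for each i ∈ F there is a good strict set containing i
  have hFact1 : ∀ i ∈ F, ∃ T : Finset (Fin d), T ⊆ F ∧ StrictOn E α T ∧ i ∈ T := by
    intro i hi
    obtain ⟨ρ, hρE, hρi, hρge, hρeq⟩ := g2_produce hEG2 hα hβE (fun j => le_rfl) hβge hαβ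
      rfl (hβF i hi) (fun j h => min_eq_left (hβge j))
    refine ⟨Finset.univ.filter (fun l => α l < ρ l), ?_, ⟨ρ, hρE, ?_⟩, ?_⟩
    · intro l hl
      rw [Finset.mem_filter] at hl
      by_contra hlF
      have hd : α l ≠ β l := ne_of_lt (hβout l hlF)
      have := hρeq l hd
      omega
    · intro l
      refine ⟨fun hl => (Finset.mem_filter.mp hl).2, fun hl => ?_⟩
      have := hρge l
      simp only [Finset.mem_filter, Finset.mem_univ, true_and] at hl
      omega
    · simp only [Finset.mem_filter, Finset.mem_univ, true_and]
      exact hρi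
  -- Step 2: minimal strict sets
  have hMex : ∀ i : Fin d, ∃ Tm : Finset (Fin d), i ∈ F →
      Tm ⊆ F ∧ StrictOn E α Tm ∧ i ∈ Tm ∧
        ∀ T', T' ⊆ F → StrictOn E α T' → i ∈ T' → Tm ⊆ T' := by
    intro i
    by_cases hi : i ∈ F
    · obtain ⟨T, hTF, hTs, hiT⟩ := hFact1 i hi
      obtain ⟨Tm, h⟩ := exists_minimal_strict hEinf T.card T hTF hTs hiT le_rfl
      exact ⟨Tm, fun _ => h⟩
    · exact ⟨∅, fun h => absurd h hi⟩
  choose M hM using hMex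
  have hMsub : ∀ i ∈ F, M i ⊆ F := fun i hi => (hM i hi).1
  have hMs : ∀ i ∈ F, StrictOn E α (M i) := fun i hi => (hM i hi).2.1
  have hMmem : ∀ i ∈ F, i ∈ M i := fun i hi => (hM i hi).2.2.1
  have hMmin : ∀ i ∈ F, ∀ T', T' ⊆ F → StrictOn E α T' → i ∈ T' → M i ⊆ T' :=
    fun i hi => (hM i hi).2.2.2
  -- Step 3: key separation claim
  have hC : ∀ i ∈ F, ∀ x, x ∈ M i → i ∈ M x := by
    intro i hi x hx
    have hxF : x ∈ F := hMsub i hi hx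
    by_contra hniMx
    obtain ⟨η, hηE, hηpr⟩ := hMs x hxF
    have hηge : ∀ j, α j ≤ η j := strictOn_ge hηpr
    have hβη : β ≠ η := by
      intro h
      have h1 : α m0 < β m0 := hβout m0 hm0
      have h2 : η m0 = α m0 := (hηpr m0).2 (fun hc => hm0 (hMsub x hxF hc))
      rw [h] at h1
      omega
    have hmin : ∀ j, β j ≠ η j → min (β j) (η j) = α j := by
      intro j hdne
      by_cases hj : j ∈ F
      · rw [hβF j hj]
        exact min_eq_left (hηge j)
      · rw [(hηpr j).2 (fun hc => hj (hMsub x hxF hc))]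
        exact min_eq_right (hβge j)
    obtain ⟨ρ, hρE, hρi, hρge, hρeq⟩ := g2_produce hEG2 hβE hηE hβge hηge hβη
      (hβF i hi) ((hηpr i).2 hniMx) hmin
    have hT'F : Finset.univ.filter (fun l => α l < ρ l) ⊆ F := by
      intro l hl
      rw [Finset.mem_filter] at hl
      by_contra hlF
      have hd : β l ≠ η l := by
        have h1 := hβout l hlF
        have h2 := (hηpr l).2 (fun hc => hlF (hMsub x hxF hc))
        omega
      have := hρeq l hd
      omega
    have hT's : StrictOn E α (Finset.univ.filter (fun l => α l < ρ l)) := by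
      refine ⟨ρ, hρE, fun l => ⟨fun hl => (Finset.mem_filter.mp hl).2, fun hl => ?_⟩⟩
      have := hρge l
      simp only [Finset.mem_filter, Finset.mem_univ, true_and] at hl
      omega
    have hiT' : i ∈ Finset.univ.filter (fun l => α l < ρ l) := by
      simp only [Finset.mem_filter, Finset.mem_univ, true_and]
      exact hρi
    have hxT' : x ∉ Finset.univ.filter (fun l => α l < ρ l) := by
      have hd : β x ≠ η x := by
        have h1 := (hηpr x).1 (hMmem x hxF)
        have h2 := hβF x hxF
        omega
      have := hρeq x hd
      simp only [Finset.mem_filter, Finset.mem_univ, true_and]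
      omega
    exact hxT' (hMmin i hi _ hT'F hT's hiT' hx)
  have hEqM : ∀ i ∈ F, ∀ x, x ∈ M i → M x = M i := by
    intro i hi x hx
    have hxF : x ∈ F := hMsub i hi hx
    apply Finset.Subset.antisymm
    · exact hMmin x hxF (M i) (hMsub i hi) (hMs i hi) hx
    · exact hMmin i hi (M x) (hMsub x hxF) (hMs x hxF) (hC i hi x hx)
  -- Step 4: the partition
  have hMsne : (F.image M).Nonempty := hFne.image M
  have hr1 : 1 ≤ (F.image M).card := Finset.card_pos.mpr hMsne
  have hr2 : (F.image M).card ≤ F.card := Finset.card_image_le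
  set r := (F.image M).card with hrdef
  let e := (F.image M).equivFin
  let Tset : Fin r → Finset (Fin d) := fun j => ((e.symm j : { x // x ∈ F.image M }) : Finset (Fin d))
  have hTmem : ∀ j, Tset j ∈ F.image M := fun j => (e.symm j).2
  have hTex : ∀ j, ∃ i ∈ F, M i = Tset j := fun j => Finset.mem_image.mp (hTmem j)
  have hTF : ∀ j, Tset j ⊆ F := by
    intro j
    obtain ⟨i, hi, hMi⟩ := hTex j
    exact hMi ▸ hMsub i hi
  have hTs : ∀ j, StrictOn E α (Tset j) := by
    intro j
    obtain ⟨i, hi, hMi⟩ := hTex j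
    exact hMi ▸ hMs i hi
  have hTne : ∀ j, (Tset j).Nonempty := by
    intro j
    obtain ⟨i, hi, hMi⟩ := hTex j
    exact ⟨i, hMi ▸ hMmem i hi⟩
  have hTdisj : ∀ j k, j ≠ k → ∀ l, l ∈ Tset j → l ∉ Tset k := by
    intro j k hjk l hlj hlk
    obtain ⟨i, hi, hMi⟩ := hTex j
    obtain ⟨i', hi', hMi'⟩ := hTex k
    have h1 : M l = Tset j := by
      rw [← hMi]
      exact hEqM i hi l (hMi ▸ hlj)
    have h2 : M l = Tset k := by
      rw [← hMi']
      exact hEqM i' hi' l (hMi' ▸ hlk)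
    have : (e.symm j : { x // x ∈ F.image M }) = e.symm k :=
      Subtype.ext (h1.symm.trans h2)
    exact hjk (e.symm.injective this)
  have hCov : ∀ x ∈ F, ∃ j, Tset j = M x := by
    intro x hx
    refine ⟨e ⟨M x, Finset.mem_image_of_mem M hx⟩, ?_⟩
    show ((e.symm (e ⟨M x, _⟩) : { x // x ∈ F.image M }) : Finset (Fin d)) = M x
    rw [Equiv.symm_apply_apply]
  have hwit : ∀ j : Fin r, ∃ ε, ε ∈ E ∧ ∀ l,
      (l ∈ Tset j → α l < ε l) ∧ (l ∉ Tset j → ε l = α l) := fun j => hTs j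
  choose βs hβsE hβspr using hwit
  have hβsge : ∀ j l, α l ≤ βs j l := fun j => strictOn_ge (hβspr j)
  -- assemble
  refine ⟨r, hr1, hr2, βs, fun j => (Tset j)ᶜ, ?_, ?_, ?_, ?_⟩
  · intro j x hx
    rw [Finset.mem_compl] at hx ⊢
    exact fun hc => hx (hTF j hc)
  · intro x
    constructor
    · intro h
      rw [Finset.mem_compl]
      intro hxF
      obtain ⟨j, hj⟩ := hCov x hxF
      have := h j
      rw [Finset.mem_compl] at this
      exact this (hj ▸ hMmem x hxF)
    · intro hx j
      rw [Finset.mem_compl] at hx ⊢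
      exact fun hc => hx (hTF j hc)
  · intro j
    refine ⟨hβsE j, fun l hl => ?_, fun l hl => ?_⟩
    · exact (hβspr j l).2 (Finset.mem_compl.mp hl)
    · rw [Finset.mem_compl, not_not] at hl
      exact (hβspr j l).1 hl
  · refine ⟨hα, ?_, ?_⟩
    · intro k
      refine Fin.cases ?_ ?_ k
      · rw [Fin.cons_zero]
        exact hβE
      · intro k'
        rw [Fin.cons_succ]
        exact hβsE k'
    · have hmix : ∀ (k : Fin r) l, β l ⊓ βs k l = α l := by
        intro k l
        by_cases hl : l ∈ F
        · rw [hβF l hl]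
          exact inf_eq_left.mpr (hβsge k l)
        · rw [(hβspr k l).2 (fun hc => hl (hTF k hc))]
          exact inf_eq_right.mpr (hβge l)
      have hdd : ∀ (j k : Fin r), j ≠ k → ∀ l, βs j l ⊓ βs k l = α l := by
        intro j k hjk l
        by_cases hl : l ∈ Tset j
        · rw [(hβspr k l).2 (hTdisj j k hjk l hl)]
          exact inf_eq_right.mpr (hβsge j l)
        · rw [(hβspr j l).2 hl]
          exact inf_eq_left.mpr (hβsge k l)
      refine ⟨by omega, Fin.cons F (fun j => (Tset j)ᶜ), ?_, ?_, ?_, ?_⟩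
      · intro j
        refine Fin.cases ?_ ?_ j
        · rw [Fin.cons_zero]
          exact ⟨hFne, hF.ne⟩
        · intro j'
          rw [Fin.cons_succ]
          constructor
          · exact ⟨m0, Finset.mem_compl.mpr (fun hc => hm0 (hTF j' hc))⟩
          · intro hc
            obtain ⟨t, ht⟩ := hTne j'
            have : t ∈ (Tset j')ᶜ := hc ▸ Finset.mem_univ t
            exact (Finset.mem_compl.mp this) ht
      · intro j
        refine Fin.cases ?_ ?_ j
        · rw [Fin.cons_zero, Fin.cons_zero]
          exact ⟨hES hβE, hβF, hβout⟩
        · intro j'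
          rw [Fin.cons_succ, Fin.cons_succ]
          refine ⟨hES (hβsE j'), fun l hl => ?_, fun l hl => ?_⟩
          · exact (hβspr j' l).2 (Finset.mem_compl.mp hl)
          · rw [Finset.mem_compl, not_not] at hl
            exact (hβspr j' l).1 hl
      · intro j k hjk
        funext l
        rw [Pi.inf_apply]
        rcases Fin.eq_zero_or_eq_succ j with rfl | ⟨j', rfl⟩
        · rcases Fin.eq_zero_or_eq_succ k with rfl | ⟨k', rfl⟩
          · exact absurd rfl hjk
          · rw [Fin.cons_zero, Fin.cons_succ]
            exact (hmix k' l).symm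
        · rcases Fin.eq_zero_or_eq_succ k with rfl | ⟨k', rfl⟩
          · rw [Fin.cons_zero, Fin.cons_succ, inf_comm]
            exact (hmix j' l).symm
          · rw [Fin.cons_succ, Fin.cons_succ]
            refine (hdd j' k' (fun h => hjk (by rw [h])) l).symm
      · intro x
        by_cases hx : x ∈ F
        · obtain ⟨j, hj⟩ := hCov x hx
          refine ⟨j.succ, ?_⟩
          rw [Fin.cons_succ, Finset.mem_compl, not_not]
          exact hj ▸ hMmem x hx
        · exact ⟨0, by rwa [Fin.cons_zero]⟩
end

section
/- Let S ⊆ ℕ^d be a good semigroup, E ⊆ S a good ideal with conductor c_E, α ∈ ℕ^d, and suppose c_E ∈ Δ^E_F(α) for some nonempty F ⊊ I (i.e. (c_E)_i = α_i for all i ∈ F and (c_E)_j > α_j for all j ∉ F). Then the following are equivalent: (1) α ∈ E; (2) Δ̃_{F̂}(α) ⊆ E (where Δ̃ is taken over ℕ^d); (3) Δ̃^E_{F̂}(α) ≠ ∅. -/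
theorem stmt_6 {d : ℕ} (hd : 1 ≤ d) (S E : Set (Fin d → ℕ))
    (hS : IsGoodSemigroup S) (hE : IsGoodIdeal S E)
    (cE : Fin d → ℕ) (hcE : IsConductor E cE)
    (α : Fin d → ℕ)
    (F : Finset (Fin d)) (hFne : F.Nonempty) (hF : F ⊂ Finset.univ)
    (hc : cE ∈ DeltaSet E F α) :
    (α ∈ E ↔ DeltaTilde (Set.univ : Set (Fin d → ℕ)) Fᶜ α ⊆ E) ∧
    (α ∈ E ↔ (DeltaTilde E Fᶜ α).Nonempty) := by
  obtain ⟨hcEE, hcF, hcFc⟩ := hc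
  obtain ⟨j0, -, hj0⟩ := Finset.exists_of_ssubset hF
  have hconv : ∀ x, cE ≤ x → x ∈ E := hcE.1
  have hG1 : ∀ a ∈ E, ∀ b ∈ E, a ⊓ b ∈ E := hE.2.2.2.1
  have hG2 := hE.2.2.2.2
  -- step: raise coordinate i ∈ F while fixing things off F and not decreasing on F
  have step : ∀ τ, τ ∈ E → (∀ j ∉ F, τ j = α j) → (∀ j ∈ F, α j ≤ τ j) →
      ∀ i ∈ F, ∃ ε, ε ∈ E ∧ (∀ j ∉ F, ε j = α j) ∧ (∀ j ∈ F, τ j ≤ ε j) ∧ τ i < ε i := by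
    intro τ hτ hoff hon i hi
    set μ : Fin d → ℕ := fun j => if j = i then τ i else max (τ j) (cE j) with hμdef
    have hμE : μ ∈ E := by
      apply hconv
      intro j
      by_cases hji : j = i
      · subst hji; simp only [hμdef, if_pos rfl]
        rw [hcF j hi]; exact hon j hi
      · simp only [hμdef, if_neg hji]; exact le_max_right _ _
    have hj0i : j0 ≠ i := fun h => hj0 (h ▸ hi)
    have hμj0 : μ j0 = max (τ j0) (cE j0) := by simp only [hμdef, if_neg hj0i]
    have hτμ : τ ≠ μ := by
      intro h
      have h0 := congrFun h j0
      rw [hμj0, hoff j0 hj0] at h0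
      have := hcFc j0 hj0
      have := le_max_right (τ j0) (cE j0)
      omega
    have hτμi : τ i = μ i := by simp only [hμdef, if_pos rfl]
    obtain ⟨ε, hεE, hεi, hεj⟩ := hG2 τ hτ μ hμE hτμ i hτμi
    refine ⟨ε, hεE, ?_, ?_, hεi⟩
    · intro j hj
      have hji : j ≠ i := fun h => hj (h ▸ hi)
      have hμj : μ j = cE j := by
        simp only [hμdef, if_neg hji]
        exact max_eq_right (by rw [hoff j hj]; exact le_of_lt (hcFc j hj))
      have hne : τ j ≠ μ j := by rw [hμj, hoff j hj]; exact Nat.ne_of_lt (hcFc j hj)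
      have := (hεj j hji).2 hne
      rw [this, hμj, hoff j hj]
      exact min_eq_left (le_of_lt (hcFc j hj))
    · intro j hjF
      by_cases hji : j = i
      · subst hji; exact le_of_lt hεi
      · have hμj : τ j ≤ μ j := by simp only [hμdef, if_neg hji]; exact le_max_left _ _
        have := (hεj j hji).1
        rwa [min_eq_left hμj] at this
  -- reach: push all coordinates in F above a target β
  have reach : ∀ (β : Fin d → ℕ) (n : ℕ), ∀ τ, τ ∈ E → (∀ j ∉ F, τ j = α j) →
      (∀ j ∈ F, α j ≤ τ j) → (∑ j ∈ F, (β j - τ j)) ≤ n →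
      ∃ τ', τ' ∈ E ∧ (∀ j ∉ F, τ' j = α j) ∧ ∀ j ∈ F, β j ≤ τ' j := by
    intro β n
    induction n with
    | zero =>
      intro τ hτ hoff hon hsum
      refine ⟨τ, hτ, hoff, fun j hj => ?_⟩
      have h0 : β j - τ j = 0 := by
        have := Finset.sum_eq_zero_iff.mp (Nat.le_zero.mp hsum) j hj
        exact this
      omega
    | succ n ih =>
      intro τ hτ hoff hon hsum
      by_cases hall : ∀ j ∈ F, β j ≤ τ j
      · exact ⟨τ, hτ, hoff, hall⟩
      · push_neg at hall
        obtain ⟨i, hi, hlt⟩ := hall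
        obtain ⟨ε, hεE, hεoff, hεge, hεi⟩ := step τ hτ hoff hon i hi
        apply ih ε hεE hεoff (fun j hj => le_trans (hon j hj) (hεge j hj))
        have hsub : ∑ j ∈ F, (β j - ε j) < ∑ j ∈ F, (β j - τ j) := by
          apply Finset.sum_lt_sum (fun j hj => Nat.sub_le_sub_left (hεge j hj) _)
          exact ⟨i, hi, by omega⟩
        omega
  -- key: if α ∈ E then every β ≥ α agreeing with α off F belongs to E
  have key : α ∈ E → ∀ β : Fin d → ℕ, (∀ j ∉ F, β j = α j) → (∀ j ∈ F, α j ≤ β j) → β ∈ E := by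
    intro hα β hoff hon
    obtain ⟨τ', hτ', hτoff, hτge⟩ :=
      reach β (∑ j ∈ F, (β j - α j)) α hα (fun j _ => rfl) (fun j _ => le_refl _) le_rfl
    have hγE : (fun j => max (β j) (cE j)) ∈ E := hconv _ (fun j => le_max_right _ _)
    have hβeq : β = τ' ⊓ (fun j => max (β j) (cE j)) := by
      funext j
      show β j = min (τ' j) (max (β j) (cE j))
      by_cases hj : j ∈ F
      · have h1 : max (β j) (cE j) = β j :=
          max_eq_left (by rw [hcF j hj]; exact hon j hj)
        rw [h1, min_eq_right (hτge j hj)]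
      · have h1 : max (β j) (cE j) = cE j :=
          max_eq_right (by rw [hoff j hj]; exact le_of_lt (hcFc j hj))
        rw [h1, hτoff j hj, hoff j hj, min_eq_left (le_of_lt (hcFc j hj))]
    rw [hβeq]
    exact hG1 _ hτ' _ hγE
  -- (1) ⇒ (2)
  have h12 : α ∈ E → DeltaTilde (Set.univ : Set (Fin d → ℕ)) Fᶜ α ⊆ E := by
    intro hα β hβ
    obtain ⟨⟨-, hβF, hβFc⟩, hβne⟩ := hβ
    exact key hα β (fun j hj => hβF j (Finset.mem_compl.mpr hj))
      (fun j hj => hβFc j (by simp [Finset.mem_compl, hj]))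
  -- (2) ⇒ (3)
  have h23 : DeltaTilde (Set.univ : Set (Fin d → ℕ)) Fᶜ α ⊆ E →
      (DeltaTilde E Fᶜ α).Nonempty := by
    intro h2
    obtain ⟨i0, hi0⟩ := hFne
    set β : Fin d → ℕ := Function.update α i0 (α i0 + 1) with hβdef
    have hβi0 : β i0 = α i0 + 1 := Function.update_self _ _ _
    have hβoth : ∀ j, j ≠ i0 → β j = α j := fun j hj => Function.update_of_ne hj _ _
    have hβne : β ≠ α := by
      intro h
      have := congrFun h i0
      rw [hβi0] at this; omega
    have hβmem : β ∈ DeltaTilde (Set.univ : Set (Fin d → ℕ)) Fᶜ α := by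
      refine ⟨⟨trivial, ?_, ?_⟩, hβne⟩
      · intro i hi
        exact hβoth i (fun h => (Finset.mem_compl.mp hi) (h ▸ hi0))
      · intro j _
        by_cases hji : j = i0
        · subst hji; rw [hβi0]; omega
        · rw [hβoth j hji]
    exact ⟨β, ⟨⟨h2 hβmem, hβmem.1.2.1, hβmem.1.2.2⟩, hβne⟩⟩
  -- (3) ⇒ (1)
  have h31 : (DeltaTilde E Fᶜ α).Nonempty → α ∈ E := by
    rintro ⟨β, ⟨⟨hβE, hβF, hβFc⟩, -⟩⟩
    have hαeq : α = β ⊓ cE := by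
      funext j
      show α j = min (β j) (cE j)
      by_cases hj : j ∈ F
      · have h1 : α j ≤ β j := hβFc j (by simp [Finset.mem_compl, hj])
        rw [hcF j hj] at *
        omega
      · rw [hβF j (Finset.mem_compl.mpr hj)]
        exact (min_eq_left (le_of_lt (hcFc j hj))).symm
    rw [hαeq]
    exact hG1 _ hβE _ hcEE
  exact ⟨⟨h12, fun h => h31 (h23 h)⟩, ⟨fun hα => h23 (h12 hα), h31⟩⟩
end

section
/- Let S ⊆ ℕ^d be a good semigroup, E ⊆ S a good ideal, α ∈ S, and F ⊊ I. Assume Δ^E_F(α) ≠ ∅ and Δ^E_H(α) ≠ ∅ for some nonempty H ⊊ F. Then there exists a set T with (F \ H) ⊆ T ⊊ F such that Δ^E_T(α) ≠ ∅. -/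
theorem stmt_9 {d : ℕ} (hd : 1 ≤ d) (S E : Set (Fin d → ℕ))
    (hS : IsGoodSemigroup S) (hE : IsGoodIdeal S E)
    (α : Fin d → ℕ) (hα : α ∈ S)
    (F H : Finset (Fin d)) (hF : F ⊂ Finset.univ)
    (hHne : H.Nonempty) (hHF : H ⊂ F)
    (h1 : (DeltaSet E F α).Nonempty) (h2 : (DeltaSet E H α).Nonempty) :
    ∃ T : Finset (Fin d), F \ H ⊆ T ∧ T ⊂ F ∧ (DeltaSet E T α).Nonempty := by
  obtain ⟨β, hβE, hβF, hβF'⟩ := h1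
  obtain ⟨γ, hγE, hγH, hγH'⟩ := h2
  obtain ⟨i, hiH⟩ := hHne
  have hiF : i ∈ F := hHF.subset hiH
  have hne : β ≠ γ := by
    obtain ⟨k, hkF, hkH⟩ := Finset.exists_of_ssubset hHF
    intro h
    have e1 := hβF k hkF
    have e2 := hγH' k hkH
    rw [h] at e1; omega
  have hiq : β i = γ i := by rw [hβF i hiF, hγH i hiH]
  obtain ⟨ε, hεE, hεi, hεj⟩ := hE.2.2.2.2 β hβE γ hγE hne i hiq
  have hβi : β i = α i := hβF i hiF
  refine ⟨F.filter (fun j => ε j = α j), ?_, ?_, ε, hεE, ?_, ?_⟩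
  · intro j hj
    rw [Finset.mem_sdiff] at hj
    obtain ⟨hjF, hjH⟩ := hj
    have hji : j ≠ i := fun h => hjH (h ▸ hiH)
    obtain ⟨hmin, heq⟩ := hεj j hji
    have e1 := hβF j hjF
    have e2 := hγH' j hjH
    rw [Finset.mem_filter]
    exact ⟨hjF, by rw [heq (by omega)]; omega⟩
  · refine Finset.ssubset_iff_of_subset (Finset.filter_subset _ _) |>.mpr
      ⟨i, hiF, ?_⟩
    simp only [Finset.mem_filter]
    omega
  · intro j hj
    rw [Finset.mem_filter] at hj
    exact hj.2
  · intro j hj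
    rw [Finset.mem_filter, not_and] at hj
    by_cases hjF : j ∈ F
    · have hεne := hj hjF
      by_cases hji : j = i
      · subst hji; omega
      · obtain ⟨hmin, _⟩ := hεj j hji
        have e1 := hβF j hjF
        have e2 : α j ≤ γ j := by
          by_cases hjH : j ∈ H
          · exact (hγH j hjH).ge
          · exact (hγH' j hjH).le
        omega
    · have hji : j ≠ i := fun h => hjF (h ▸ hiF)
      obtain ⟨hmin, _⟩ := hεj j hji
      have e1 := hβF' j hjF
      have e2 := hγH' j (fun h => hjF (hHF.subset h))
      omega
end

section
/- Let S ⊆ ℕ^d be a good semigroup, E ⊆ S a nonempty proper good ideal with conductor c_E, A = S \ E with levels A₁,…,A_N. Let α ∈ ℕ^d be such that c_E ∈ Δ^E_F(α) for some nonempty F ⊊ I. Then for every i ∈ {1,…,N} the following are equivalent: (1) α ∈ A_i; (2) Δ̃_{F̂}(α) ⊆ A_i (where Δ̃ is taken over ℕ^d); (3) Δ̃_{F̂}(α) contains some element of A_i. -/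
section Stmt12Aux

variable {d : ℕ}

/-- Similarity: equal off `F`, and both `≥ cE` on `F`. -/
def Sim (cE : Fin d → ℕ) (F : Finset (Fin d)) (a b : Fin d → ℕ) : Prop :=
  (∀ j ∉ F, a j = b j) ∧ ∀ i ∈ F, cE i ≤ a i ∧ cE i ≤ b i

lemma Sim.symm {cE : Fin d → ℕ} {F : Finset (Fin d)} {a b : Fin d → ℕ}
    (h : Sim cE F a b) : Sim cE F b a :=
  ⟨fun j hj => (h.1 j hj).symm, fun i hi => ⟨(h.2 i hi).2, (h.2 i hi).1⟩⟩

/-- A set closed under `⊓`, satisfying (G2), and containing everything `≥ cE`. -/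
structure GoodPack (X : Set (Fin d → ℕ)) (cE : Fin d → ℕ) : Prop where
  inf : ∀ a ∈ X, ∀ b ∈ X, a ⊓ b ∈ X
  g2 : ∀ a ∈ X, ∀ b ∈ X, a ≠ b → ∀ i : Fin d, a i = b i →
      ∃ ε ∈ X, a i < ε i ∧ ∀ j : Fin d, j ≠ i →
        min (a j) (b j) ≤ ε j ∧ (a j ≠ b j → ε j = min (a j) (b j))
  cond : ∀ x : Fin d → ℕ, cE ≤ x → x ∈ X

lemma step_lift {X : Set (Fin d → ℕ)} {cE : Fin d → ℕ} (hX : GoodPack X cE)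
    {δ : Fin d → ℕ} (hδ : δ ∈ X) {i0 j0 : Fin d} (hne : j0 ≠ i0)
    (hc0 : cE i0 ≤ δ i0) :
    (fun i => if i = i0 then δ i0 + 1 else δ i) ∈ X := by
  have hxX : (fun j => if j = i0 then δ i0 else max (cE j) (δ j + 1)) ∈ X := by
    apply hX.cond
    intro j
    by_cases h : j = i0
    · subst h; simpa using hc0
    · simp only [if_neg h]; exact le_max_left _ _
  have hδx : δ ≠ (fun j => if j = i0 then δ i0 else max (cE j) (δ j + 1)) := by
    intro h
    have := congrFun h j0
    simp only [if_neg hne] at this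
    omega
  have hi : δ i0 = (fun j => if j = i0 then δ i0 else max (cE j) (δ j + 1)) i0 := by simp
  obtain ⟨ε, hεX, hεi, hεj⟩ := hX.g2 δ hδ _ hxX hδx i0 hi
  have hγX : (fun j => if j = i0 then δ i0 + 1 else max (cE j) (δ j)) ∈ X := by
    apply hX.cond
    intro j
    by_cases h : j = i0
    · subst h; simp only [if_pos]; omega
    · simp only [if_neg h]; exact le_max_left _ _
  have hkey : (fun i => if i = i0 then δ i0 + 1 else δ i) =
      ε ⊓ (fun j => if j = i0 then δ i0 + 1 else max (cE j) (δ j)) := by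
    funext j
    simp only [Pi.inf_apply]
    by_cases h : j = i0
    · subst h; simp only [if_pos]; omega
    · have h1 := hεj j h
      simp only [if_neg h] at h1 ⊢
      have h2 : δ j ≠ max (cE j) (δ j + 1) := by omega
      have h3 := h1.2 h2
      omega
  rw [hkey]
  exact hX.inf ε hεX _ hγX

lemma multi_lift {X : Set (Fin d → ℕ)} {cE : Fin d → ℕ} (hX : GoodPack X cE)
    {F : Finset (Fin d)} {j0 : Fin d} (hj0 : j0 ∉ F) {η : Fin d → ℕ} :
    ∀ n (δ : Fin d → ℕ), δ ∈ X → (∀ i ∈ F, cE i ≤ δ i) → (∀ j ∉ F, η j = δ j) →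
      δ ≤ η → (∑ i, (η i - δ i)) ≤ n → η ∈ X := by
  intro n
  induction n with
  | zero =>
    intro δ hδ _ _ hle hsum
    have heq : η = δ := by
      funext i
      have hz : η i - δ i = 0 := by
        have h1 : η i - δ i ≤ ∑ j, (η j - δ j) :=
          Finset.single_le_sum (f := fun j => η j - δ j) (fun j _ => Nat.zero_le _)
            (Finset.mem_univ i)
        omega
      have h2 : δ i ≤ η i := hle i
      omega
    rw [heq]; exact hδ
  | succ n ih =>
    intro δ hδ hcF hoff hle hsum
    by_cases heq : η = δ
    · rw [heq]; exact hδ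
    · obtain ⟨i0, hi0⟩ := Function.ne_iff.mp heq
      have hlei0 : δ i0 ≤ η i0 := hle i0
      have hlt : δ i0 < η i0 := lt_of_le_of_ne hlei0 (Ne.symm hi0)
      have hi0F : i0 ∈ F := by
        by_contra h
        exact hi0 (hoff i0 h)
      have hnei0 : j0 ≠ i0 := fun h => hj0 (h ▸ hi0F)
      set δ' : Fin d → ℕ := fun i => if i = i0 then δ i0 + 1 else δ i with hδ'def
      have hδ' : δ' ∈ X := step_lift hX hδ hnei0 (hcF i0 hi0F)
      refine ih δ' hδ' ?_ ?_ ?_ ?_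
      · intro i hi
        by_cases h : i = i0
        · subst h; simp only [hδ'def, if_pos]
          exact le_trans (hcF i hi) (Nat.le_succ _)
        · simp only [hδ'def, if_neg h]; exact hcF i hi
      · intro j hj
        have hji : j ≠ i0 := fun h => hj (h ▸ hi0F)
        simp only [hδ'def, if_neg hji]
        exact hoff j hj
      · intro i
        have h2 : δ i ≤ η i := hle i
        by_cases h : i = i0
        · subst h; simp only [hδ'def, if_pos]; omega
        · simp only [hδ'def, if_neg h]; exact h2
      · have hlt2 : (∑ i, (η i - δ' i)) < ∑ i, (η i - δ i) := by
          apply Finset.sum_lt_sum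
          · intro i _
            by_cases h : i = i0
            · subst h; simp only [hδ'def, if_pos]; omega
            · simp only [hδ'def, if_neg h]; exact le_rfl
          · exact ⟨i0, Finset.mem_univ _, by simp only [hδ'def, if_pos]; omega⟩
        omega

lemma sim_mem {X : Set (Fin d → ℕ)} {cE : Fin d → ℕ} (hX : GoodPack X cE)
    {F : Finset (Fin d)} {j0 : Fin d} (hj0 : j0 ∉ F) {a b : Fin d → ℕ}
    (hsim : Sim cE F a b) (ha : a ∈ X) : b ∈ X := by
  set μ : Fin d → ℕ := fun i => max (a i) (b i) with hμdef
  have hμ : μ ∈ X := by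
    refine multi_lift hX hj0 (∑ i, (μ i - a i)) a ha (fun i hi => (hsim.2 i hi).1)
      (fun j hj => by simp [hμdef, (hsim.1 j hj).symm]) (fun i => le_max_left _ _) le_rfl
  set x : Fin d → ℕ := fun i => if i ∈ F then b i else max (cE i) (a i) with hxdef
  have hx : x ∈ X := by
    apply hX.cond
    intro i
    by_cases h : i ∈ F
    · simp only [hxdef, if_pos h]; exact (hsim.2 i h).2
    · simp only [hxdef, if_neg h]; exact le_max_left _ _
  have : b = μ ⊓ x := by
    funext i
    by_cases h : i ∈ F
    · simp only [Pi.inf_apply, hμdef, hxdef, if_pos h]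
      omega
    · have := hsim.1 i h
      simp only [Pi.inf_apply, hμdef, hxdef, if_neg h]
      omega
  rw [this]
  exact hX.inf μ hμ x hx

lemma sim_SE {S E : Set (Fin d → ℕ)} {cE : Fin d → ℕ}
    (hSp : GoodPack S cE) (hEp : GoodPack E cE)
    {F : Finset (Fin d)} {j0 : Fin d} (hj0 : j0 ∉ F) {a b : Fin d → ℕ}
    (hsim : Sim cE F a b) (ha : a ∈ S \ E) : b ∈ S \ E :=
  ⟨sim_mem hSp hj0 hsim ha.1, fun hb => ha.2 (sim_mem hEp hj0 hsim.symm hb)⟩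

lemma sim_B {S E prev : Set (Fin d → ℕ)} {cE : Fin d → ℕ}
    (hSp : GoodPack S cE) (hEp : GoodPack E cE)
    {F : Finset (Fin d)} {j0 : Fin d} (hj0 : j0 ∉ F) (hFne : F.Nonempty)
    (hprev : ∀ a b : Fin d → ℕ, Sim cE F a b → a ∈ prev → b ∈ prev)
    {a b : Fin d → ℕ} (hsim : Sim cE F a b) (ha : a ∈ Bstep S E prev) :
    b ∈ Bstep S E prev := by
  obtain ⟨⟨haSE, haP⟩, hmax⟩ := ha
  have hbSE : b ∈ S \ E := sim_SE hSp hEp hj0 hsim haSE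
  have hbP : b ∉ prev := fun h => haP (hprev b a hsim.symm h)
  refine ⟨⟨hbSE, hbP⟩, ?_⟩
  intro δ hδ hdom
  rcases hdom with h | hlt
  · exact h.symm
  · exfalso
    set δ2 : Fin d → ℕ := fun i => if i ∈ F then max (δ i) (a i + 1) else δ i with hδ2def
    have hsimδ : Sim cE F δ δ2 := by
      constructor
      · intro j hj; simp only [hδ2def, if_neg hj]
      · intro i hi
        have h1 : cE i ≤ b i := (hsim.2 i hi).2
        have h2 : b i < δ i := hlt i
        simp only [hδ2def, if_pos hi]
        omega
    have hδ2SE : δ2 ∈ S \ E := sim_SE hSp hEp hj0 hsimδ hδ.1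
    have hδ2P : δ2 ∉ prev := fun h => hδ.2 (hprev δ2 δ hsimδ.symm h)
    have hdom2 : DomLE a δ2 := by
      right
      intro j
      by_cases hj : j ∈ F
      · simp only [hδ2def, if_pos hj]; omega
      · simp only [hδ2def, if_neg hj]
        have := hsim.1 j hj
        have := hlt j
        omega
    have heq : δ2 = a := hmax δ2 ⟨hδ2SE, hδ2P⟩ hdom2
    obtain ⟨i1, hi1⟩ := hFne
    have := congrFun heq i1
    simp only [hδ2def, if_pos hi1] at this
    omega

lemma sim_C {S E prev : Set (Fin d → ℕ)} {cE : Fin d → ℕ}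
    (hSp : GoodPack S cE) (hEp : GoodPack E cE)
    {F : Finset (Fin d)} {j0 : Fin d} (hj0 : j0 ∉ F) (hFne : F.Nonempty)
    (hprev : ∀ a b : Fin d → ℕ, Sim cE F a b → a ∈ prev → b ∈ prev)
    {a b : Fin d → ℕ} (hsim : Sim cE F a b) (ha : a ∈ Cstep S E prev) :
    b ∈ Cstep S E prev := by
  obtain ⟨haB, r, hr1, hrd, β, hβB, haSE, hβSE, h2r, G, hG, hGd, hpair, hGint⟩ := ha
  have hbSE : b ∈ S \ E := sim_SE hSp hEp hj0 hsim haSE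
  set β' : Fin r → Fin d → ℕ :=
    fun k i => if i ∈ G k then b i else max (β k i) (b i + 1) with hβ'def
  have hsimβ : ∀ k, Sim cE F (β k) (β' k) := by
    intro k
    obtain ⟨hβkS, hOnG, hOffG⟩ := hGd k
    constructor
    · intro j hj
      by_cases hg : j ∈ G k
      · simp only [hβ'def, if_pos hg]
        rw [hOnG j hg, hsim.1 j hj]
      · simp only [hβ'def, if_neg hg]
        have h1 := hOffG j hg
        have h2 := hsim.1 j hj
        omega
    · intro i hi
      have h1 : cE i ≤ a i := (hsim.2 i hi).1
      have h2 : cE i ≤ b i := (hsim.2 i hi).2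
      by_cases hg : i ∈ G k
      · have := hOnG i hg
        simp only [hβ'def, if_pos hg]
        omega
      · have := hOffG i hg
        simp only [hβ'def, if_neg hg]
        omega
  have hβ'B : ∀ k, β' k ∈ Bstep S E prev :=
    fun k => sim_B hSp hEp hj0 hFne hprev (hsimβ k) (hβB k)
  have hβ'SE : ∀ k, β' k ∈ S \ E := fun k => (hβ'B k).1.1
  have hcover : ∀ (k l : Fin r), k ≠ l → ∀ i : Fin d, i ∉ G k → i ∈ G l := by
    intro k l hkl i hik
    by_contra hil
    have h1 := congrFun (hpair k l hkl) i
    simp only [Pi.inf_apply] at h1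
    have h2 := (hGd k).2.2 i hik
    have h3 := (hGd l).2.2 i hil
    omega
  refine ⟨sim_B hSp hEp hj0 hFne hprev hsim haB, r, hr1, hrd, β', hβ'B,
    hbSE, hβ'SE, h2r, G, hG, ?_, ?_, hGint⟩
  · intro k
    refine ⟨(hβ'SE k).1, ?_, ?_⟩
    · intro i hi; simp only [hβ'def, if_pos hi]
    · intro i hi
      simp only [hβ'def, if_neg hi]
      omega
  · intro k l hkl
    funext i
    have h1 := congrFun (hpair k l hkl) i
    simp only [Pi.inf_apply] at h1 ⊢
    by_cases hik : i ∈ G k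
    · by_cases hil : i ∈ G l
      · simp only [hβ'def, if_pos hik, if_pos hil]; omega
      · simp only [hβ'def, if_pos hik, if_neg hil]; omega
    · have hil : i ∈ G l := hcover k l hkl i hik
      simp only [hβ'def, if_neg hik, if_pos hil]; omega

lemma sim_D {S E prev : Set (Fin d → ℕ)} {cE : Fin d → ℕ}
    (hSp : GoodPack S cE) (hEp : GoodPack E cE)
    {F : Finset (Fin d)} {j0 : Fin d} (hj0 : j0 ∉ F) (hFne : F.Nonempty)
    (hprev : ∀ a b : Fin d → ℕ, Sim cE F a b → a ∈ prev → b ∈ prev)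
    {a b : Fin d → ℕ} (hsim : Sim cE F a b) (ha : a ∈ Dstep S E prev) :
    b ∈ Dstep S E prev :=
  ⟨sim_B hSp hEp hj0 hFne hprev hsim ha.1,
   fun h => ha.2 (sim_C hSp hEp hj0 hFne hprev hsim.symm h)⟩

lemma sim_Dacc {S E : Set (Fin d → ℕ)} {cE : Fin d → ℕ}
    (hSp : GoodPack S cE) (hEp : GoodPack E cE)
    {F : Finset (Fin d)} {j0 : Fin d} (hj0 : j0 ∉ F) (hFne : F.Nonempty)
    (k : ℕ) :
    ∀ a b : Fin d → ℕ, Sim cE F a b → a ∈ Dacc S E k → b ∈ Dacc S E k := by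
  induction k with
  | zero => intro a b _ ha; exact absurd ha (Set.notMem_empty a)
  | succ k ih =>
    intro a b hsim ha
    rcases ha with h | h
    · exact Or.inl (ih a b hsim h)
    · exact Or.inr (sim_D hSp hEp hj0 hFne ih hsim h)

end Stmt12Aux


theorem stmt_12 {d : ℕ} (hd : 1 ≤ d) (S E : Set (Fin d → ℕ))
    (hS : IsGoodSemigroup S) (hE : IsGoodIdeal S E) (hprop : E ≠ S)
    (cE : Fin d → ℕ) (hcE : IsConductor E cE)
    (N : ℕ) (hN : IsLevelsNumber S E N)
    (α : Fin d → ℕ)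
    (F : Finset (Fin d)) (hFne : F.Nonempty) (hF : F ⊂ Finset.univ)
    (hc : cE ∈ DeltaSet E F α) :
    ∀ i : ℕ, 1 ≤ i → i ≤ N →
      ((α ∈ Alevel S E N i ↔
          DeltaTilde (Set.univ : Set (Fin d → ℕ)) Fᶜ α ⊆ Alevel S E N i) ∧
       (α ∈ Alevel S E N i ↔
          (DeltaTilde (Set.univ : Set (Fin d → ℕ)) Fᶜ α ∩ Alevel S E N i).Nonempty)) := by
  obtain ⟨hcEE, hcF, hcFc⟩ := hc
  have hSp : GoodPack S cE :=
    ⟨hS.2.2.1, hS.2.2.2.1, fun x hx => hE.1 (hcE.1 x hx)⟩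
  have hEp : GoodPack E cE :=
    ⟨hE.2.2.2.1, hE.2.2.2.2, hcE.1⟩
  obtain ⟨j0, -, hj0⟩ := Finset.exists_of_ssubset hF
  intro i h1i hiN
  have hA : Alevel S E N i = Dstep S E (Dacc S E (N - i)) := if_pos ⟨h1i, hiN⟩
  have hprev : ∀ a b : Fin d → ℕ, Sim cE F a b →
      a ∈ Dacc S E (N - i) → b ∈ Dacc S E (N - i) :=
    sim_Dacc hSp hEp hj0 hFne (N - i)
  have hconst : ∀ a b : Fin d → ℕ, Sim cE F a b →
      a ∈ Alevel S E N i → b ∈ Alevel S E N i := by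
    intro a b hs ha
    rw [hA] at ha ⊢
    exact sim_D hSp hEp hj0 hFne hprev hs ha
  have hsimall : ∀ β ∈ DeltaTilde (Set.univ : Set (Fin d → ℕ)) Fᶜ α, Sim cE F α β := by
    rintro β ⟨⟨-, h1, h2⟩, -⟩
    constructor
    · intro j hj
      exact (h1 j (Finset.mem_compl.mpr hj)).symm
    · intro iF hiF
      have e1 : cE iF = α iF := hcF iF hiF
      have e2 : α iF ≤ β iF := h2 iF (by simp [Finset.mem_compl, hiF])
      constructor
      · exact le_of_eq e1
      · omega
  set β0 : Fin d → ℕ := fun j => if j ∈ F then α j + 1 else α j with hβ0def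
  have hβ0 : β0 ∈ DeltaTilde (Set.univ : Set (Fin d → ℕ)) Fᶜ α := by
    constructor
    · refine ⟨Set.mem_univ _, ?_, ?_⟩
      · intro iF hiF
        simp only [hβ0def, if_neg (Finset.mem_compl.mp hiF)]
      · intro j hj
        have hjF : j ∈ F := by simpa [Finset.mem_compl] using hj
        simp only [hβ0def, if_pos hjF]
        omega
    · intro h
      obtain ⟨i1, hi1⟩ := hFne
      have := congrFun (Set.mem_singleton_iff.mp h) i1
      simp only [hβ0def, if_pos hi1] at this
      omega
  constructor
  · constructor
    · intro hα β hβ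
      exact hconst α β (hsimall β hβ) hα
    · intro hsub
      exact hconst β0 α (hsimall β0 hβ0).symm (hsub hβ0)
  · constructor
    · intro hα
      exact ⟨β0, hβ0, hconst α β0 (hsimall β0 hβ0) hα⟩
    · rintro ⟨β, hβmem, hβA⟩
      exact hconst β α (hsimall β hβmem).symm hβA
end

section
/- Let S ⊆ ℕ^d be a good semigroup, E ⊆ S a nonempty proper good ideal with conductor c_E, F ⊊ U ⊆ I with U nonempty, and let α(U) be a U-subspace of E (so α ∈ E and α_j = (c_E)_j for all j ∉ U). Then: (1) for every β ∈ ℕ^d with β_j = (c_E)_j for all j ∉ U, the U-subspace β(U) belongs to Δ^E_F(α(U)) if and only if β ∈ Δ^E_{F ∪ Û}(α), and β(U) belongs to Δ̃^E_F(α(U)) if and only if β ∈ Δ̃^E_{F ∪ Û}(α); (2) for every set G with (U \ F) ⊆ G ⊆ U and every U-subspace β(U) of E, β(U) ∈ Δ̃^E_G(α(U)) if and only if β ∈ Δ̃^E_G(α). -/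
theorem stmt_13 {d : ℕ} (hd : 1 ≤ d) (S E : Set (Fin d → ℕ))
    (hS : IsGoodSemigroup S) (hE : IsGoodIdeal S E) (hprop : E ≠ S)
    (cE : Fin d → ℕ) (hcE : IsConductor E cE)
    (U F : Finset (Fin d)) (hU : U.Nonempty) (hF : F ⊂ U)
    (α : Fin d → ℕ) (hα : IsSubspaceRep E cE U α) :
    (∀ β : Fin d → ℕ, (∀ j ∉ U, β j = cE j) →
      ((SubDelta E cE U F α β ↔ β ∈ DeltaSet E (F ∪ Uᶜ) α) ∧
       (SubDeltaT E cE U F α β ↔ β ∈ DeltaTilde E (F ∪ Uᶜ) α))) ∧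
    (∀ G : Finset (Fin d), U \ F ⊆ G → G ⊆ U →
      ∀ β : Fin d → ℕ, IsSubspaceRep E cE U β →
        (SubDeltaT E cE U G α β ↔ β ∈ DeltaTilde E G α)) := by
  have hoff : ∀ j ∉ U, α j = cE j := hα.2
  constructor
  · intro β hβc
    have heqoff : ∀ j ∉ U, β j = α j := fun j hj => by rw [hβc j hj, hoff j hj]
    constructor
    · constructor
      · rintro ⟨⟨hβE, _⟩, h1, h2⟩
        refine ⟨hβE, ?_, ?_⟩
        · intro i hi
          rcases Finset.mem_union.1 hi with h | h
          · exact h1 i h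
          · exact heqoff i (Finset.mem_compl.1 h)
        · intro j hj
          rw [Finset.mem_union, Finset.mem_compl] at hj
          push_neg at hj
          exact h2 j hj.2 hj.1
      · rintro ⟨hβE, h1, h2⟩
        refine ⟨⟨hβE, hβc⟩, fun j hj => h1 j (Finset.mem_union_left _ hj),
          fun j hjU hjF => h2 j ?_⟩
        simp [Finset.mem_union, hjF, hjU]
    · constructor
      · rintro ⟨⟨hβE, _⟩, h1, h2, h3⟩
        refine ⟨⟨hβE, ?_, ?_⟩, ?_⟩
        · intro i hi
          rcases Finset.mem_union.1 hi with h | h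
          · exact h1 i h
          · exact heqoff i (Finset.mem_compl.1 h)
        · intro j hj
          rw [Finset.mem_union, Finset.mem_compl] at hj
          push_neg at hj
          exact h2 j hj.2 hj.1
        · intro hβα
          apply h3
          intro j hjU
          rw [Set.mem_singleton_iff.1 hβα]
      · rintro ⟨⟨hβE, h1, h2⟩, hne⟩
        rw [Set.mem_singleton_iff] at hne
        refine ⟨⟨hβE, hβc⟩, fun j hj => h1 j (Finset.mem_union_left _ hj),
          fun j hjU hjF => h2 j (by simp [Finset.mem_union, hjF, hjU]), ?_⟩
        intro hall
        apply hne
        funext j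
        by_cases hj : j ∈ U
        · exact hall j hj
        · exact heqoff j hj
  · intro G _ hGU β hβ
    have heqoff : ∀ j ∉ U, β j = α j := fun j hj => by rw [hβ.2 j hj, hoff j hj]
    constructor
    · rintro ⟨_, h1, h2, h3⟩
      refine ⟨⟨hβ.1, h1, ?_⟩, ?_⟩
      · intro j hj
        by_cases hjU : j ∈ U
        · exact h2 j hjU hj
        · exact le_of_eq (heqoff j hjU).symm
      · intro hβα
        apply h3
        intro j _
        rw [Set.mem_singleton_iff.1 hβα]
    · rintro ⟨⟨hβE, h1, h2⟩, hne⟩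
      rw [Set.mem_singleton_iff] at hne
      refine ⟨hβ, h1, fun j _ hj => h2 j hj, ?_⟩
      intro hall
      apply hne
      funext j
      by_cases hj : j ∈ U
      · exact hall j hj
      · exact heqoff j hj
end

section
/- Let S ⊆ ℕ^d be a good semigroup, E ⊆ S a nonempty proper good ideal with conductor c_E, F ⊊ U ⊆ I with F nonempty, α(U) a U-subspace of E, and β(U) ∈ Δ^E_F(α(U)). Then there exist r with 1 ≤ r ≤ |F|, U-subspaces β^(1)(U),…,β^(r)(U) of E, and sets G₁,…,G_r with G_i ⊇ (U \ F) for every i and G₁ ∩ ⋯ ∩ G_r = U \ F, such that β^(i)(U) ∈ Δ^E_{G_i}(α(U)) for every i and α(U) is the complete infimum of β(U), β^(1)(U), …, β^(r)(U). -/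
namespace Stmt15Aux

variable {d : ℕ}

/-- `K` is a "good equality set": `K ⊊ F` and there is `δ ∈ E` agreeing with `α`
on `K`, on `U \ F` and with `cE` off `U`, and strictly bigger than `α` on `F \ K`. -/
def Kgood (E : Set (Fin d → ℕ)) (cE : Fin d → ℕ) (U F : Finset (Fin d))
    (α : Fin d → ℕ) (K : Finset (Fin d)) : Prop :=
  K ⊆ F ∧ K ≠ F ∧ ∃ δ : Fin d → ℕ, δ ∈ E ∧ (∀ j, j ∉ U → δ j = cE j) ∧
    (∀ j ∈ U, j ∉ F → δ j = α j) ∧ (∀ j ∈ K, δ j = α j) ∧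
    ∀ j ∈ F, j ∉ K → α j < δ j

lemma Kgood_ge {E : Set (Fin d → ℕ)} {cE : Fin d → ℕ} {U F : Finset (Fin d)}
    {α : Fin d → ℕ} {K : Finset (Fin d)} (h : Kgood E cE U F α K)
    {δ : Fin d → ℕ} (hδ4 : ∀ j ∈ K, δ j = α j) (hδ5 : ∀ j ∈ F, j ∉ K → α j < δ j) :
    ∀ j ∈ F, α j ≤ δ j := by
  intro j hj
  by_cases hjK : j ∈ K
  · exact (hδ4 j hjK).symm.le
  · exact (hδ5 j hj hjK).le

/-- Normalization: replace the coordinates off `U` by `cE`. -/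
lemma normalize_mem {S E : Set (Fin d → ℕ)} (hE : IsGoodIdeal S E)
    {cE : Fin d → ℕ} (hcE : IsConductor E cE)
    (U : Finset (Fin d)) {ε : Fin d → ℕ} (hε : ε ∈ E)
    (h : ∀ j, j ∉ U → cE j ≤ ε j) :
    (fun j => if j ∈ U then ε j else cE j) ∈ E := by
  classical
  have hζ : (fun j => if j ∈ U then ε j + cE j else cE j) ∈ E := by
    apply hcE.1
    intro j
    by_cases hj : j ∈ U <;> simp [hj, Nat.le_add_left]
  have hm := hE.2.2.2.1 ε hε _ hζ
  have heq : ε ⊓ (fun j => if j ∈ U then ε j + cE j else cE j)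
      = fun j => if j ∈ U then ε j else cE j := by
    funext j
    show min (ε j) _ = _
    by_cases hj : j ∈ U
    · simp only [hj, if_true]; omega
    · simp only [hj, if_false]
      exact min_eq_right (h j hj)
  rwa [heq] at hm

/-- From a suitable `ε ∈ E` produce a good equality set omitting `i`. -/
lemma Kgood_of_eps {S E : Set (Fin d → ℕ)} (hE : IsGoodIdeal S E)
    {cE : Fin d → ℕ} (hcE : IsConductor E cE)
    {U F : Finset (Fin d)} (hFU : F ⊆ U)
    {α ε : Fin d → ℕ} (hε : ε ∈ E) {i : Fin d} (hi : i ∈ F)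
    (hstrict : α i < ε i)
    (hUF : ∀ j ∈ U, j ∉ F → ε j = α j)
    (hgeF : ∀ j ∈ F, α j ≤ ε j)
    (hout : ∀ j, j ∉ U → cE j ≤ ε j) :
    ∃ K, Kgood E cE U F α K ∧ i ∉ K ∧ ∀ j ∈ F, ε j = α j → j ∈ K := by
  classical
  refine ⟨F.filter (fun j => ε j = α j), ?_, ?_, ?_⟩
  · refine ⟨Finset.filter_subset _ _, ?_, fun j => if j ∈ U then ε j else cE j,
      normalize_mem hE hcE U hε hout, ?_, ?_, ?_, ?_⟩
    · intro hKF
      have hi' : i ∈ F.filter (fun j => ε j = α j) := by rw [hKF]; exact hi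
      have := (Finset.mem_filter.mp hi').2
      omega
    · intro j hj; simp [hj]
    · intro j hjU hjF; simp [hjU, hUF j hjU hjF]
    · intro j hj
      obtain ⟨hjF, hje⟩ := Finset.mem_filter.mp hj
      simp [hFU hjF, hje]
    · intro j hjF hjK
      have hje : ε j ≠ α j := by
        intro h; exact hjK (Finset.mem_filter.mpr ⟨hjF, h⟩)
      have := hgeF j hjF
      simp only [hFU hjF, if_true]
      omega
  · intro h
    have := (Finset.mem_filter.mp h).2
    omega
  · intro j hjF hje
    exact Finset.mem_filter.mpr ⟨hjF, hje⟩

/-- Base construction: for every `i ∈ F` there is a good equality set omitting `i`. -/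
lemma Kgood_base {S E : Set (Fin d → ℕ)} (hE : IsGoodIdeal S E)
    {cE : Fin d → ℕ} (hcE : IsConductor E cE)
    {U F : Finset (Fin d)} (hF : F ⊂ U)
    {α β : Fin d → ℕ} (hα : IsSubspaceRep E cE U α) (hβ : SubDelta E cE U F α β) :
    ∀ i ∈ F, ∃ K, Kgood E cE U F α K ∧ i ∉ K := by
  intro i hi
  obtain ⟨j0, hj0U, hj0F⟩ := Finset.exists_of_ssubset hF
  have hj0lt : α j0 < β j0 := hβ.2.2 j0 hj0U hj0F
  have hne : α ≠ β := fun h => by rw [h] at hj0lt; omega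
  have hαβi : α i = β i := (hβ.2.1 i hi).symm
  obtain ⟨ε, hεE, hεi, hεj⟩ := hE.2.2.2.2 α hα.1 β hβ.1.1 hne i hαβi
  have hiU : i ∈ U := hF.subset hi
  refine (Kgood_of_eps hE hcE hF.subset hεE hi hεi ?_ ?_ ?_).imp
    (fun K hK => ⟨hK.1, hK.2.1⟩)
  · intro j hjU hjF
    have hji : j ≠ i := fun h => hjF (h ▸ hi)
    have hlt : α j < β j := hβ.2.2 j hjU hjF
    have := (hεj j hji).2 (by omega)
    omega
  · intro j hjF
    by_cases hji : j = i
    · subst hji; omega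
    · have heq : α j = β j := (hβ.2.1 j hjF).symm
      have := (hεj j hji).1
      omega
  · intro j hjU
    have hji : j ≠ i := fun h => hjU (h ▸ hiU)
    have h1 : α j = cE j := hα.2 j hjU
    have h2 : β j = cE j := hβ.1.2 j hjU
    have := (hεj j hji).1
    omega

/-- Flip construction: from a good equality set `K` and `i ∈ K`, produce one
containing `F \ K` and omitting `i`. -/
lemma Kgood_flip {S E : Set (Fin d → ℕ)} (hE : IsGoodIdeal S E)
    {cE : Fin d → ℕ} (hcE : IsConductor E cE)
    {U F : Finset (Fin d)} (hF : F ⊂ U)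
    {α β : Fin d → ℕ} (hβ : SubDelta E cE U F α β)
    {K : Finset (Fin d)} (hK : Kgood E cE U F α K) {i : Fin d} (hiK : i ∈ K) :
    ∃ K', Kgood E cE U F α K' ∧ i ∉ K' ∧ ∀ j ∈ F, j ∉ K → j ∈ K' := by
  obtain ⟨hKF, hKne, δ, hδE, hδ2, hδ3, hδ4, hδ5⟩ := hK
  have hiF : i ∈ F := hKF hiK
  have hiU : i ∈ U := hF.subset hiF
  obtain ⟨j0, hj0U, hj0F⟩ := Finset.exists_of_ssubset hF
  have hj0lt : α j0 < β j0 := hβ.2.2 j0 hj0U hj0F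
  have hδj0 : δ j0 = α j0 := hδ3 j0 hj0U hj0F
  have hne : δ ≠ β := fun h => by rw [h] at hδj0; omega
  have hδβi : δ i = β i := by rw [hδ4 i hiK, hβ.2.1 i hiF]
  obtain ⟨ε, hεE, hεi, hεj⟩ := hE.2.2.2.2 δ hδE β hβ.1.1 hne i hδβi
  have hεilt : α i < ε i := by rw [hδ4 i hiK] at hεi; exact hεi
  have hFK : ∀ j ∈ F, j ∉ K → ε j = α j := by
    intro j hjF hjK
    have hji : j ≠ i := fun h => hjK (h ▸ hiK)
    have h1 : α j < δ j := hδ5 j hjF hjK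
    have h2 : β j = α j := hβ.2.1 j hjF
    have := (hεj j hji).2 (by omega)
    omega
  have c1 : ∀ j ∈ U, j ∉ F → ε j = α j := by
    intro j hjU hjF
    have hji : j ≠ i := fun h => hjF (h ▸ hiF)
    have h1 : δ j = α j := hδ3 j hjU hjF
    have h2 : α j < β j := hβ.2.2 j hjU hjF
    have := (hεj j hji).2 (by omega)
    omega
  have c2 : ∀ j ∈ F, α j ≤ ε j := by
    intro j hjF
    by_cases hji : j = i
    · subst hji; omega
    · by_cases hjK : j ∈ K
      · have h1 : δ j = α j := hδ4 j hjK
        have h2 : β j = α j := hβ.2.1 j hjF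
        have := (hεj j hji).1
        omega
      · exact (hFK j hjF hjK).symm.le
  have c3 : ∀ j, j ∉ U → cE j ≤ ε j := by
    intro j hjU
    have hji : j ≠ i := fun h => hjU (h ▸ hiU)
    have h1 : δ j = cE j := hδ2 j hjU
    have h2 : β j = cE j := hβ.1.2 j hjU
    have := (hεj j hji).1
    omega
  obtain ⟨K', hK'g, hiK', hmem⟩ := Kgood_of_eps hE hcE hF.subset hεE hiF hεilt c1 c2 c3
  exact ⟨K', hK'g, hiK', fun j hjF hjK => hmem j hjF (hFK j hjF hjK)⟩

/-- Union of two good equality sets (when it stays proper). -/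
lemma Kgood_union {S E : Set (Fin d → ℕ)} (hE : IsGoodIdeal S E)
    {cE : Fin d → ℕ} {U F : Finset (Fin d)} {α : Fin d → ℕ}
    {K1 K2 : Finset (Fin d)} (h1 : Kgood E cE U F α K1) (h2 : Kgood E cE U F α K2)
    (hne : K1 ∪ K2 ≠ F) : Kgood E cE U F α (K1 ∪ K2) := by
  obtain ⟨hK1F, -, δ1, hδ1E, hδ12, hδ13, hδ14, hδ15⟩ := h1
  obtain ⟨hK2F, -, δ2, hδ2E, hδ22, hδ23, hδ24, hδ25⟩ := h2
  have hge1 : ∀ j ∈ F, α j ≤ δ1 j := by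
    intro j hj; by_cases h : j ∈ K1
    · exact (hδ14 j h).symm.le
    · exact (hδ15 j hj h).le
  have hge2 : ∀ j ∈ F, α j ≤ δ2 j := by
    intro j hj; by_cases h : j ∈ K2
    · exact (hδ24 j h).symm.le
    · exact (hδ25 j hj h).le
  refine ⟨Finset.union_subset hK1F hK2F, hne, δ1 ⊓ δ2,
    hE.2.2.2.1 δ1 hδ1E δ2 hδ2E, ?_, ?_, ?_, ?_⟩
  · intro j hj
    show min (δ1 j) (δ2 j) = cE j
    rw [hδ12 j hj, hδ22 j hj, min_self]
  · intro j hjU hjF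
    show min (δ1 j) (δ2 j) = α j
    rw [hδ13 j hjU hjF, hδ23 j hjU hjF, min_self]
  · intro j hj
    show min (δ1 j) (δ2 j) = α j
    rcases Finset.mem_union.mp hj with h | h
    · have := hδ14 j h
      have := hge2 j (hK1F h)
      omega
    · have := hδ24 j h
      have := hge1 j (hK2F h)
      omega
  · intro j hjF hj
    show α j < min (δ1 j) (δ2 j)
    rw [Finset.mem_union] at hj
    push_neg at hj
    have := hδ15 j hjF hj.1
    have := hδ25 j hjF hj.2
    omega

open Classical in
/-- The family of good equality sets omitting `i`. -/
noncomputable def Kfam (E : Set (Fin d → ℕ)) (cE : Fin d → ℕ)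
    (U F : Finset (Fin d)) (α : Fin d → ℕ) (i : Fin d) : Finset (Finset (Fin d)) :=
  F.powerset.filter (fun K => Kgood E cE U F α K ∧ i ∉ K)

/-- `Mset i`: the largest good equality set omitting `i`. -/
noncomputable def Mset (E : Set (Fin d → ℕ)) (cE : Fin d → ℕ)
    (U F : Finset (Fin d)) (α : Fin d → ℕ) (i : Fin d) : Finset (Fin d) :=
  (Kfam E cE U F α i).sup id

lemma mem_Kfam {E : Set (Fin d → ℕ)} {cE : Fin d → ℕ} {U F : Finset (Fin d)}
    {α : Fin d → ℕ} {i : Fin d} {K : Finset (Fin d)} :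
    K ∈ Kfam E cE U F α i ↔ Kgood E cE U F α K ∧ i ∉ K := by
  classical
  simp only [Kfam, Finset.mem_filter, Finset.mem_powerset]
  exact ⟨fun h => h.2, fun h => ⟨h.1.1, h⟩⟩

lemma subset_Mset {E : Set (Fin d → ℕ)} {cE : Fin d → ℕ} {U F : Finset (Fin d)}
    {α : Fin d → ℕ} {i : Fin d} {K : Finset (Fin d)}
    (hK : Kgood E cE U F α K) (hi : i ∉ K) : K ⊆ Mset E cE U F α i :=
  Finset.le_sup (f := id) (mem_Kfam.mpr ⟨hK, hi⟩)

lemma not_mem_Mset_self {E : Set (Fin d → ℕ)} {cE : Fin d → ℕ}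
    {U F : Finset (Fin d)} {α : Fin d → ℕ} {i : Fin d} :
    i ∉ Mset E cE U F α i := by
  intro h
  obtain ⟨K, hK, hiK⟩ := Finset.mem_sup.mp h
  exact (mem_Kfam.mp hK).2 hiK

lemma Mset_subset_F {E : Set (Fin d → ℕ)} {cE : Fin d → ℕ}
    {U F : Finset (Fin d)} {α : Fin d → ℕ} {i : Fin d} :
    Mset E cE U F α i ⊆ F := by
  intro x hx
  obtain ⟨K, hK, hxK⟩ := Finset.mem_sup.mp hx
  exact (mem_Kfam.mp hK).1.1 hxK

lemma Kgood_Mset {S E : Set (Fin d → ℕ)} (hE : IsGoodIdeal S E)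
    {cE : Fin d → ℕ} (hcE : IsConductor E cE)
    {U F : Finset (Fin d)} (hF : F ⊂ U)
    {α β : Fin d → ℕ} (hα : IsSubspaceRep E cE U α) (hβ : SubDelta E cE U F α β)
    {i : Fin d} (hiF : i ∈ F) : Kgood E cE U F α (Mset E cE U F α i) := by
  classical
  have hne : (Kfam E cE U F α i).Nonempty := by
    obtain ⟨K, hK, hiK⟩ := Kgood_base hE hcE hF hα hβ i hiF
    exact ⟨K, mem_Kfam.mpr ⟨hK, hiK⟩⟩
  have key : ∀ T : Finset (Finset (Fin d)), T.Nonempty →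
      (∀ K ∈ T, Kgood E cE U F α K ∧ i ∉ K) →
      Kgood E cE U F α (T.sup id) ∧ i ∉ T.sup id := by
    intro T
    induction T using Finset.induction_on with
    | empty => intro h _; exact absurd h (by simp)
    | @insert K T' hKT' ih =>
      intro _ hT
      have hKg := hT K (Finset.mem_insert_self K T')
      rcases T'.eq_empty_or_nonempty with h0 | hTne'
      · subst h0
        simpa using hKg
      · have hT' := ih hTne' (fun L hL => hT L (Finset.mem_insert_of_mem hL))
        rw [Finset.sup_insert]
        have hiu : i ∉ K ⊔ T'.sup id := by
          intro h
          rcases Finset.mem_union.mp h with h | h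
          · exact hKg.2 h
          · exact hT'.2 h
        refine ⟨?_, hiu⟩
        have hiF' : i ∈ F := hiF
        refine Kgood_union hE hKg.1 hT'.1 ?_
        intro h
        apply hiu
        show i ∈ K ∪ T'.sup id
        rw [show K ∪ T'.sup id = F from h]
        exact hiF'
  exact (key _ hne (fun K hK => mem_Kfam.mp hK)).1

lemma Mset_symm {S E : Set (Fin d → ℕ)} (hE : IsGoodIdeal S E)
    {cE : Fin d → ℕ} (hcE : IsConductor E cE)
    {U F : Finset (Fin d)} (hF : F ⊂ U)
    {α β : Fin d → ℕ} (hβ : SubDelta E cE U F α β)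
    {i j : Fin d} (hjF : j ∈ F) (hij : j ∉ Mset E cE U F α i) :
    i ∉ Mset E cE U F α j := by
  intro hi
  obtain ⟨K, hKmem, hiK⟩ := Finset.mem_sup.mp hi
  obtain ⟨hKg, hjK⟩ := mem_Kfam.mp hKmem
  obtain ⟨K', hK'g, hiK', hsub⟩ := Kgood_flip hE hcE hF hβ hKg hiK
  exact hij (subset_Mset hK'g hiK' (hsub j hjF hjK))

lemma Mset_eq {S E : Set (Fin d → ℕ)} (hE : IsGoodIdeal S E)
    {cE : Fin d → ℕ} (hcE : IsConductor E cE)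
    {U F : Finset (Fin d)} (hF : F ⊂ U)
    {α β : Fin d → ℕ} (hβ : SubDelta E cE U F α β)
    {i j : Fin d} (hiF : i ∈ F) (hjF : j ∈ F)
    (hij : j ∉ Mset E cE U F α i) :
    Mset E cE U F α i = Mset E cE U F α j := by
  have hji : i ∉ Mset E cE U F α j := Mset_symm hE hcE hF hβ hjF hij
  have dir : ∀ a b : Fin d, b ∉ Mset E cE U F α a →
      Mset E cE U F α a ⊆ Mset E cE U F α b := by
    intro a b hab x hx
    obtain ⟨K, hK, hxK⟩ := Finset.mem_sup.mp hx
    obtain ⟨hKg, haK⟩ := mem_Kfam.mp hK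
    have hbK : b ∉ K := fun h => hab (subset_Mset hKg haK h)
    exact subset_Mset hKg hbK hxK
  exact Finset.Subset.antisymm (dir i j hij) (dir j i hji)

end Stmt15Aux


open Stmt15Aux in
theorem stmt_15' {d : ℕ} (hd : 1 ≤ d) (S E : Set (Fin d → ℕ))
    (hS : IsGoodSemigroup S) (hE : IsGoodIdeal S E) (hprop : E ≠ S)
    (cE : Fin d → ℕ) (hcE : IsConductor E cE)
    (U F : Finset (Fin d)) (hU : U.Nonempty) (hFne : F.Nonempty) (hF : F ⊂ U)
    (α β : Fin d → ℕ) (hα : IsSubspaceRep E cE U α)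
    (hβ : SubDelta E cE U F α β) :
    ∃ r : ℕ, 1 ≤ r ∧ r ≤ F.card ∧
      ∃ (βs : Fin r → Fin d → ℕ) (G : Fin r → Finset (Fin d)),
        (∀ i, U \ F ⊆ G i) ∧
        (∀ x : Fin d, (∀ i, x ∈ G i) ↔ x ∈ U \ F) ∧
        (∀ i, SubDelta E cE U (G i) α (βs i)) ∧
        SubIsCompleteInf S cE U α (Fin.cons β βs) := by
  classical
  have hFU : F ⊆ U := hF.subset
  obtain ⟨j0, hj0U, hj0F⟩ := Finset.exists_of_ssubset hF
  set M : Fin d → Finset (Fin d) := Mset E cE U F α with hM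
  set 𝓜 : Finset (Finset (Fin d)) := F.image M with h𝓜
  have h𝓜ne : 𝓜.Nonempty := hFne.image M
  have hr0 : 0 < 𝓜.card := Finset.card_pos.mpr h𝓜ne
  refine ⟨𝓜.card, hr0, Finset.card_image_le, ?_⟩
  let e : {x // x ∈ 𝓜} ≃ Fin 𝓜.card := 𝓜.equivFin
  let Ks : Fin 𝓜.card → Finset (Fin d) := fun k => (e.symm k).1
  have hKs𝓜 : ∀ k, Ks k ∈ 𝓜 := fun k => (e.symm k).2
  have hKsrep : ∀ k, ∃ i ∈ F, M i = Ks k := fun k => Finset.mem_image.mp (hKs𝓜 k)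
  have hKsgood : ∀ k, Kgood E cE U F α (Ks k) := by
    intro k
    obtain ⟨i, hiF, hMi⟩ := hKsrep k
    exact hMi ▸ Kgood_Mset hE hcE hF hα hβ hiF
  have hKsinj : ∀ j k : Fin 𝓜.card, Ks j = Ks k → j = k := by
    intro j k h
    exact e.symm.injective (Subtype.ext h)
  have hcover : ∀ x ∈ F, ∃ k, x ∉ Ks k := by
    intro x hx
    refine ⟨e ⟨M x, Finset.mem_image_of_mem M hx⟩, ?_⟩
    have hKse : Ks (e ⟨M x, Finset.mem_image_of_mem M hx⟩) = M x := by
      show (e.symm (e ⟨M x, Finset.mem_image_of_mem M hx⟩)).1 = M x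
      rw [Equiv.symm_apply_apply]
    rw [hKse]
    exact not_mem_Mset_self
  have hpair : ∀ j k : Fin 𝓜.card, j ≠ k → ∀ x ∈ F, x ∈ Ks j ∨ x ∈ Ks k := by
    intro j k hjk x hxF
    by_contra hcon
    push_neg at hcon
    obtain ⟨a, haF, hMa⟩ := hKsrep j
    obtain ⟨b, hbF, hMb⟩ := hKsrep k
    have hc1 : x ∉ M a := by rw [hMa]; exact hcon.1
    have h1 : M a = M x := Mset_eq hE hcE hF hβ haF hxF hc1
    have hc2 : x ∉ M b := by rw [hMb]; exact hcon.2
    have h2 : M b = M x := Mset_eq hE hcE hF hβ hbF hxF hc2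
    exact hjk (hKsinj j k (by rw [← hMa, ← hMb, h1, h2]))
  have hδ : ∀ k : Fin 𝓜.card, ∃ δ : Fin d → ℕ, δ ∈ E ∧
      (∀ j, j ∉ U → δ j = cE j) ∧
      (∀ j ∈ U, j ∉ F → δ j = α j) ∧ (∀ j ∈ Ks k, δ j = α j) ∧
      ∀ j ∈ F, j ∉ Ks k → α j < δ j := fun k => (hKsgood k).2.2
  choose βs hβs1 hβs2 hβs3 hβs4 hβs5 using hδ
  have hβsge : ∀ k, ∀ j ∈ F, α j ≤ βs k j := by
    intro k j hj
    by_cases h : j ∈ Ks k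
    · exact (hβs4 k j h).symm.le
    · exact (hβs5 k j hj h).le
  have hSub : ∀ k, SubDelta E cE U ((U \ F) ∪ Ks k) α (βs k) := by
    intro k
    refine ⟨⟨hβs1 k, hβs2 k⟩, ?_, ?_⟩
    · intro j hj
      rcases Finset.mem_union.mp hj with h | h
      · obtain ⟨hjU, hjF⟩ := Finset.mem_sdiff.mp h
        exact hβs3 k j hjU hjF
      · exact hβs4 k j h
    · intro j hjU hj
      have hjF : j ∈ F := by
        by_contra hjF
        exact hj (Finset.mem_union_left _ (Finset.mem_sdiff.mpr ⟨hjU, hjF⟩))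
      exact hβs5 k j hjF (fun h => hj (Finset.mem_union_right _ h))
  refine ⟨βs, fun k => (U \ F) ∪ Ks k, fun k => Finset.subset_union_left, ?_, hSub, ?_⟩
  · intro x
    constructor
    · intro hx
      by_cases hxF : x ∈ F
      · obtain ⟨k, hk⟩ := hcover x hxF
        rcases Finset.mem_union.mp (hx k) with h | h
        · exact h
        · exact absurd h hk
      · rcases Finset.mem_union.mp (hx ⟨0, hr0⟩) with h | h
        · exact h
        · exact absurd ((hKsgood _).1 h) hxF
    · intro hx k
      exact Finset.mem_union_left _ hx
  · refine ⟨by omega, Fin.cons F (fun k => (U \ F) ∪ Ks k), ?_, ?_, ?_, ?_⟩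
    · intro j
      refine Fin.cases ?_ ?_ j
      · simp only [Fin.cons_zero]
        exact ⟨hFne, hF⟩
      · intro k
        simp only [Fin.cons_succ]
        constructor
        · exact ⟨j0, Finset.mem_union_left _ (Finset.mem_sdiff.mpr ⟨hj0U, hj0F⟩)⟩
        · have hsub : (U \ F) ∪ Ks k ⊆ U :=
            Finset.union_subset Finset.sdiff_subset ((hKsgood k).1.trans hFU)
          rw [Finset.ssubset_iff_of_subset hsub]
          obtain ⟨i, hiF, hMi⟩ := hKsrep k
          refine ⟨i, hFU hiF, ?_⟩
          intro h
          rcases Finset.mem_union.mp h with h | h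
          · exact (Finset.mem_sdiff.mp h).2 hiF
          · rw [← hMi] at h
            exact not_mem_Mset_self h
    · intro j
      refine Fin.cases ?_ ?_ j
      · simp only [Fin.cons_zero]
        exact ⟨⟨hE.1 hβ.1.1, hβ.1.2⟩, hβ.2.1, hβ.2.2⟩
      · intro k
        simp only [Fin.cons_succ]
        exact ⟨⟨hE.1 (hSub k).1.1, (hSub k).1.2⟩, (hSub k).2.1, (hSub k).2.2⟩
    · have hmix : ∀ k : Fin 𝓜.card, ∀ i ∈ U,
          α i = min (β i) (βs k i) ∧ α i = min (βs k i) (β i) := by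
        intro k i hiU
        by_cases hiF : i ∈ F
        · have h1 : β i = α i := hβ.2.1 i hiF
          have h2 := hβsge k i hiF
          omega
        · have h1 : βs k i = α i := hβs3 k i hiU hiF
          have h2 := (hβ.2.2 i hiU hiF).le
          omega
      have hpairmin : ∀ j k : Fin 𝓜.card, j ≠ k → ∀ i ∈ U,
          α i = min (βs j i) (βs k i) := by
        intro j k hjk i hiU
        by_cases hiF : i ∈ F
        · rcases hpair j k hjk i hiF with h | h
          · have h1 := hβs4 j i h
            have h2 := hβsge k i hiF
            omega
          · have h1 := hβs4 k i h
            have h2 := hβsge j i hiF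
            omega
        · have h1 := hβs3 j i hiU hiF
          have h2 := hβs3 k i hiU hiF
          omega
      intro j k
      refine Fin.cases ?_ ?_ j
      · refine Fin.cases ?_ ?_ k
        · intro h
          exact absurd rfl h
        · intro a _ i hiU
          simp only [Fin.cons_zero, Fin.cons_succ]
          exact (hmix a i hiU).1
      · intro a
        refine Fin.cases ?_ ?_ k
        · intro _ i hiU
          simp only [Fin.cons_zero, Fin.cons_succ]
          exact (hmix a i hiU).2
        · intro b hab i hiU
          simp only [Fin.cons_succ]
          exact hpairmin a b (fun h => hab (by rw [h])) i hiU
    · intro x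
      by_cases hxF : x ∈ F
      · obtain ⟨k, hk⟩ := hcover x hxF
        refine ⟨k.succ, ?_⟩
        simp only [Fin.cons_succ]
        intro h
        rcases Finset.mem_union.mp h with h | h
        · exact (Finset.mem_sdiff.mp h).2 hxF
        · exact hk h
      · refine ⟨0, ?_⟩
        simpa [Fin.cons_zero] using hxF


theorem stmt_15 {d : ℕ} (hd : 1 ≤ d) (S E : Set (Fin d → ℕ))
    (hS : IsGoodSemigroup S) (hE : IsGoodIdeal S E) (hprop : E ≠ S)
    (cE : Fin d → ℕ) (hcE : IsConductor E cE)
    (U F : Finset (Fin d)) (hU : U.Nonempty) (hFne : F.Nonempty) (hF : F ⊂ U)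
    (α β : Fin d → ℕ) (hα : IsSubspaceRep E cE U α)
    (hβ : SubDelta E cE U F α β) :
    ∃ r : ℕ, 1 ≤ r ∧ r ≤ F.card ∧
      ∃ (βs : Fin r → Fin d → ℕ) (G : Fin r → Finset (Fin d)),
        (∀ i, U \ F ⊆ G i) ∧
        (∀ x : Fin d, (∀ i, x ∈ G i) ↔ x ∈ U \ F) ∧
        (∀ i, SubDelta E cE U (G i) α (βs i)) ∧
        SubIsCompleteInf S cE U α (Fin.cons β βs) := by
  exact stmt_15' hd S E hS hE hprop cE hcE U F hU hFne hF α β hα hβ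
end
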